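/- arXiv:2503.21174 — 4 statements merged into one kernel-verified Lean document; each statement's English description precedes it below -/
import Mathlib

section
/- Let G be a connected finite simple graph with at least two vertices. Then λ₂(G) < max_{v ∈ V} ρ(G−v) ≤ max_{e ∈ E} ρ(G−e), where λ₂(G) denotes the second-largest eigenvalue of the adjacency matrix of G (eigenvalues listed in nonincreasing order with multiplicity). -/
open Matrix Finset
open scoped Classical

noncomputable section

/-- `μ` is an eigenvalue of the real matrix `A`. -/
def IsEigenval {n : Type*} [Fintype n] (A : Matrix n n ℝ) (μ : ℝ) : Prop :=
  ∃ x : n → ℝ, x ≠ 0 ∧ A.mulVec x = μ • x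

/-- The spectral radius of a real symmetric matrix:
the largest modulus of an eigenvalue. -/
def specRad {n : Type*} [Fintype n] (A : Matrix n n ℝ) : ℝ :=
  sSup {r : ℝ | ∃ μ : ℝ, IsEigenval A μ ∧ r = |μ|}

/-- The spectral radius of a finite simple graph. -/
def grho {V : Type*} [Fintype V] [DecidableEq V] (G : SimpleGraph V) : ℝ :=
  letI := Classical.decRel G.Adj
  specRad (G.adjMatrix ℝ)

/-- max over edges of spectral radius of the edge-deleted graph -/
def rhoE {V : Type*} [Fintype V] [DecidableEq V] (G : SimpleGraph V) : ℝ :=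
  sSup {r : ℝ | ∃ e ∈ G.edgeSet, r = grho (G.deleteEdges {e})}

/-- Eigenpair of the k-power hypergraph G^(k). -/
def IsPowerEigenpair {V : Type*} [Fintype V] [DecidableEq V] (G : SimpleGraph V) (k : ℕ)
    (lam : ℂ) (x : (V ⊕ (G.edgeSet × Fin (k - 2))) → ℂ) : Prop :=
  x ≠ 0 ∧
    (∀ i : V, lam * x (Sum.inl i) ^ (k - 1) =
      ∑ j : V, if h : G.Adj i j then
        x (Sum.inl j) * ∏ t : Fin (k - 2), x (Sum.inr (⟨s(i, j), (G.mem_edgeSet).mpr h⟩, t))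
      else 0) ∧
    ∀ (i j : V) (h : G.Adj i j) (t : Fin (k - 2)),
      lam * x (Sum.inr (⟨s(i, j), (G.mem_edgeSet).mpr h⟩, t)) ^ (k - 1) =
        x (Sum.inl i) * x (Sum.inl j) *
          ∏ u ∈ Finset.univ.erase t, x (Sum.inr (⟨s(i, j), (G.mem_edgeSet).mpr h⟩, u))

/-- λ is an eigenvalue of G^(k). -/
def IsPowerEigenvalue {V : Type*} [Fintype V] [DecidableEq V] (G : SimpleGraph V) (k : ℕ)
    (lam : ℂ) : Prop :=
  ∃ x, IsPowerEigenpair G k lam x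

/-- The adjacency matrix of a signed graph, sign function `π : G.edgeSet → ℤˣ`. -/
def signedAdj {V : Type*} [Fintype V] [DecidableEq V] (G : SimpleGraph V)
    (π : G.edgeSet → ℤˣ) : Matrix V V ℝ :=
  Matrix.of fun i j => if h : G.Adj i j then ((π ⟨s(i, j), (G.mem_edgeSet).mpr h⟩ : ℤ) : ℝ) else 0

/-- Switching-equivalence of matrices. -/
def SwitchEquiv {V : Type*} [Fintype V] [DecidableEq V] (A B : Matrix V V ℝ) : Prop :=
  ∃ d : V → ℝ, (∀ i, d i = 1 ∨ d i = -1) ∧ B = Matrix.diagonal d * A * Matrix.diagonal d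

/-- A signed graph is balanced if it is switching equivalent to the all-`+1` signing. -/
def IsBalanced {V : Type*} [Fintype V] [DecidableEq V] (G : SimpleGraph V)
    (π : G.edgeSet → ℤˣ) : Prop :=
  SwitchEquiv (signedAdj G π) (signedAdj G fun _ => 1)

def IsBipartite {V : Type*} (G : SimpleGraph V) : Prop :=
  ∃ c : V → Bool, ∀ ⦃i j⦄, G.Adj i j → c i ≠ c j

end

lemma adjMatrix_isHermitian {V : Type*} [Fintype V] [DecidableEq V] (G : SimpleGraph V)
    [DecidableRel G.Adj] : (SimpleGraph.adjMatrix ℝ G).IsHermitian := by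
  rw [Matrix.IsHermitian, conjTranspose_eq_transpose_of_trivial]
  exact G.isSymm_adjMatrix

/-- The adjacency eigenvalues of `G`, sorted in nondecreasing order (with multiplicity). -/
noncomputable def sortedEigs {V : Type*} [Fintype V] [DecidableEq V] (G : SimpleGraph V) :
    List ℝ :=
  letI := Classical.decRel G.Adj
  Multiset.sort (Finset.univ.val.map (adjMatrix_isHermitian G).eigenvalues) (· ≤ ·)

/-- The second-largest adjacency eigenvalue of `G`, counted with multiplicity. -/
noncomputable def lambdaTwo {V : Type*} [Fintype V] [DecidableEq V] (G : SimpleGraph V) : ℝ :=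
  (sortedEigs G).getD (Fintype.card V - 2) 0


noncomputable section Toolkit

namespace SpecTool
set_option linter.unusedSectionVars false

variable {n : Type*} [Fintype n] [DecidableEq n] {A : Matrix n n ℝ} (hA : A.IsHermitian)
include hA

abbrev U : Matrix n n ℝ := (hA.eigenvectorUnitary : Matrix n n ℝ)

lemma starU : star (U hA) = (U hA)ᵀ := by
  rw [Matrix.star_eq_conjTranspose, conjTranspose_eq_transpose_of_trivial]

lemma UtU : (U hA)ᵀ * U hA = 1 := by
  rw [← starU]; exact Unitary.coe_star_mul_self hA.eigenvectorUnitary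

lemma UUt : U hA * (U hA)ᵀ = 1 := by
  rw [← starU]; exact Unitary.coe_mul_star_self hA.eigenvectorUnitary

lemma specA : A = U hA * diagonal hA.eigenvalues * (U hA)ᵀ := by
  rw [← starU]
  convert hA.spectral_theorem using 1
  rw [Unitary.conjStarAlgAut_apply]
  rfl

/-- coordinates of x in the eigenbasis -/
def coords (x : n → ℝ) : n → ℝ := (U hA)ᵀ *ᵥ x

lemma U_mul_coords (x : n → ℝ) : U hA *ᵥ coords hA x = x := by
  rw [coords, mulVec_mulVec, UUt, one_mulVec]

lemma coords_eq_zero_iff (x : n → ℝ) : coords hA x = 0 ↔ x = 0 := by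
  constructor
  · intro h
    rw [← U_mul_coords hA x, h, mulVec_zero]
  · intro h; rw [h, coords, mulVec_zero]

lemma normsq_eq (x : n → ℝ) : x ⬝ᵥ x = ∑ i, (coords hA x i) ^ 2 := by
  conv_lhs => rw [← U_mul_coords hA x]
  rw [dotProduct_mulVec, ← vecMul_transpose, vecMul_vecMul, UtU,
    vecMul_one, dotProduct]
  exact Finset.sum_congr rfl fun i _ => (sq (coords hA x i)).symm

lemma quad_eq (x : n → ℝ) :
    x ⬝ᵥ (A *ᵥ x) = ∑ i, hA.eigenvalues i * (coords hA x i) ^ 2 := by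
  conv_lhs => rw [specA hA]
  rw [← mulVec_mulVec, ← mulVec_mulVec, dotProduct_mulVec, ← mulVec_transpose (U hA) x]
  show coords hA x ⬝ᵥ (diagonal hA.eigenvalues *ᵥ coords hA x) = _
  rw [dotProduct]
  exact Finset.sum_congr rfl fun i _ => by rw [mulVec_diagonal]; ring


lemma eigen_transfer (x : n → ℝ) (μ : ℝ) :
    A *ᵥ x = μ • x ↔ ∀ i, hA.eigenvalues i * coords hA x i = μ * coords hA x i := by
  constructor
  · intro h
    intro i
    have key : (U hA)ᵀ * A = diagonal hA.eigenvalues * (U hA)ᵀ := by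
      calc (U hA)ᵀ * A = (U hA)ᵀ * (U hA * diagonal hA.eigenvalues * (U hA)ᵀ) := by
            rw [← specA hA]
        _ = ((U hA)ᵀ * U hA) * diagonal hA.eigenvalues * (U hA)ᵀ := by
            simp only [Matrix.mul_assoc]
        _ = diagonal hA.eigenvalues * (U hA)ᵀ := by rw [UtU, Matrix.one_mul]
    have h2 : ((U hA)ᵀ * A) *ᵥ x = μ • coords hA x := by
      rw [← mulVec_mulVec, h, mulVec_smul]
      rfl
    rw [key, ← mulVec_mulVec] at h2
    have := congrFun h2 i
    rw [mulVec_diagonal] at this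
    exact this.trans rfl
  · intro h
    have hD : diagonal hA.eigenvalues *ᵥ coords hA x = μ • coords hA x := by
      funext i
      rw [mulVec_diagonal]
      exact h i
    conv_lhs => rw [specA hA]
    rw [← mulVec_mulVec, ← mulVec_mulVec, ← coords, hD, mulVec_smul, U_mul_coords]

lemma isEigenval_iff (μ : ℝ) : IsEigenval A μ ↔ ∃ i, hA.eigenvalues i = μ := by
  constructor
  · rintro ⟨x, hx, hAx⟩
    have h := (eigen_transfer hA x μ).1 hAx
    have hc : coords hA x ≠ 0 := fun hc => hx ((coords_eq_zero_iff hA x).1 hc)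
    obtain ⟨i, hi⟩ := Function.ne_iff.1 hc
    exact ⟨i, mul_right_cancel₀ hi (h i)⟩
  · rintro ⟨i, rfl⟩
    refine ⟨⇑(hA.eigenvectorBasis i), ?_, ?_⟩
    · intro h0
      have hz : hA.eigenvectorBasis i = 0 := by
        apply (WithLp.equiv 2 (n → ℝ)).injective
        simpa using h0
      have := hA.eigenvectorBasis.orthonormal.1 i
      rw [hz] at this
      simp at this
    · exact hA.mulVec_eigenvectorBasis i

/-- the eigenvalue-modulus set is the image of a finite set -/
lemma radSet_eq :
    {r : ℝ | ∃ μ : ℝ, IsEigenval A μ ∧ r = |μ|}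
      = ↑(Finset.image (fun i => |hA.eigenvalues i|) Finset.univ) := by
  ext r
  simp only [Set.mem_setOf_eq, Finset.coe_image, Set.mem_image, Finset.mem_coe,
    Finset.mem_univ, Finset.coe_univ, Set.image_univ, Set.mem_range]
  constructor
  · rintro ⟨μ, hμ, rfl⟩
    obtain ⟨i, rfl⟩ := (isEigenval_iff hA μ).1 hμ
    exact ⟨i, rfl⟩
  · rintro ⟨i, rfl⟩
    exact ⟨hA.eigenvalues i, (isEigenval_iff hA _).2 ⟨i, rfl⟩, rfl⟩

lemma quad_le (lam : ℝ) (hmax : ∀ i, hA.eigenvalues i ≤ lam) (x : n → ℝ) :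
    x ⬝ᵥ (A *ᵥ x) ≤ lam * (x ⬝ᵥ x) := by
  rw [quad_eq hA, normsq_eq hA, Finset.mul_sum]
  exact Finset.sum_le_sum fun i _ => mul_le_mul_of_nonneg_right (hmax i) (sq_nonneg _)

lemma eigen_of_quad_eq (lam : ℝ) (hmax : ∀ i, hA.eigenvalues i ≤ lam) (x : n → ℝ)
    (hq : x ⬝ᵥ (A *ᵥ x) = lam * (x ⬝ᵥ x)) : A *ᵥ x = lam • x := by
  have hsum : ∑ i, (lam - hA.eigenvalues i) * (coords hA x i) ^ 2 = 0 := by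
    have h1 := quad_eq hA x
    have h2 := normsq_eq hA x
    rw [h1, h2, Finset.mul_sum] at hq
    have he : ∑ i, (lam - hA.eigenvalues i) * (coords hA x i) ^ 2
        = ∑ i, lam * (coords hA x i) ^ 2 - ∑ i, hA.eigenvalues i * (coords hA x i) ^ 2 := by
      rw [← Finset.sum_sub_distrib]
      exact Finset.sum_congr rfl fun i _ => by ring
    rw [he, hq, sub_self]
  have hterm := (Finset.sum_eq_zero_iff_of_nonneg
    (fun i _ => mul_nonneg (by linarith [hmax i] : (0:ℝ) ≤ lam - hA.eigenvalues i)
      (sq_nonneg (coords hA x i)))).1 hsum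
  rw [eigen_transfer hA]
  intro i
  have := hterm i (Finset.mem_univ i)
  rcases mul_eq_zero.1 this with h | h
  · rw [show hA.eigenvalues i = lam by linarith [sub_eq_zero.1 h]]
  · rw [pow_eq_zero_iff (n := 2) (by norm_num)] at h
    rw [h, mul_zero, mul_zero]

omit hA in
/-- for entrywise-nonneg `A`, `|xᵀAx| ≤ |x|ᵀA|x|` -/
lemma abs_quad_le (hnn : ∀ i j, 0 ≤ A i j) (x : n → ℝ) :
    |x ⬝ᵥ (A *ᵥ x)| ≤ (fun i => |x i|) ⬝ᵥ (A *ᵥ fun i => |x i|) := by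
  unfold dotProduct mulVec dotProduct
  refine le_trans (Finset.abs_sum_le_sum_abs _ _) (Finset.sum_le_sum fun i _ => ?_)
  rw [abs_mul]
  refine mul_le_mul_of_nonneg_left ?_ (abs_nonneg _)
  refine le_trans (Finset.abs_sum_le_sum_abs _ _) (Finset.sum_le_sum fun j _ => ?_)
  rw [abs_mul, abs_of_nonneg (hnn i j)]


variable [Nonempty n]

lemma radSet_finite : {r : ℝ | ∃ μ : ℝ, IsEigenval A μ ∧ r = |μ|}.Finite := by
  rw [radSet_eq hA]; exact Finset.finite_toSet _

lemma abs_le_specRad {μ : ℝ} (h : IsEigenval A μ) : |μ| ≤ specRad A := by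
  apply le_csSup ((radSet_finite hA).bddAbove)
  exact ⟨μ, h, rfl⟩

lemma exists_specRad : ∃ i, specRad A = |hA.eigenvalues i| := by
  have hne : {r : ℝ | ∃ μ : ℝ, IsEigenval A μ ∧ r = |μ|}.Nonempty := by
    obtain ⟨i⟩ := ‹Nonempty n›
    exact ⟨|hA.eigenvalues i|, hA.eigenvalues i, (isEigenval_iff hA _).2 ⟨i, rfl⟩, rfl⟩
  have := hne.csSup_mem (radSet_finite hA)
  obtain ⟨μ, hμ, hr⟩ := this
  obtain ⟨i, rfl⟩ := (isEigenval_iff hA μ).1 hμ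
  exact ⟨i, hr⟩

lemma eigenvalues_le_specRad (i : n) : hA.eigenvalues i ≤ specRad A :=
  le_trans (le_abs_self _) (abs_le_specRad hA ((isEigenval_iff hA _).2 ⟨i, rfl⟩))

/-- Rayleigh upper bound -/
lemma quad_le_specRad (x : n → ℝ) : x ⬝ᵥ (A *ᵥ x) ≤ specRad A * (x ⬝ᵥ x) := by
  rw [quad_eq hA, normsq_eq hA, Finset.mul_sum]
  refine Finset.sum_le_sum fun i _ => ?_
  exact mul_le_mul_of_nonneg_right (eigenvalues_le_specRad hA i) (sq_nonneg _)


lemma basis_dot {i j : n} (hij : i ≠ j) :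
    ⇑(hA.eigenvectorBasis i) ⬝ᵥ ⇑(hA.eigenvectorBasis j) = 0 := by
  have h : inner (𝕜 := ℝ) (hA.eigenvectorBasis i) (hA.eigenvectorBasis j) = (0 : ℝ) :=
    hA.eigenvectorBasis.orthonormal.2 hij
  rw [PiLp.inner_apply] at h
  simpa [dotProduct, mul_comm] using h

lemma basis_normsq (i : n) :
    ⇑(hA.eigenvectorBasis i) ⬝ᵥ ⇑(hA.eigenvectorBasis i) = 1 := by
  have h := hA.eigenvectorBasis.orthonormal.1 i
  have h2 : inner (𝕜 := ℝ) (hA.eigenvectorBasis i) (hA.eigenvectorBasis i) = (1 : ℝ) := by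
    rw [real_inner_self_eq_norm_mul_norm, h]; norm_num
  rw [PiLp.inner_apply] at h2
  simpa [dotProduct, ← pow_two] using h2

lemma basis_ne_zero (i : n) : ⇑(hA.eigenvectorBasis i) ≠ (0 : n → ℝ) := by
  intro h0
  have hz : hA.eigenvectorBasis i = 0 := by
    apply (WithLp.equiv 2 (n → ℝ)).injective
    simpa using h0
  have := hA.eigenvectorBasis.orthonormal.1 i
  rw [hz] at this
  simp at this

end SpecTool

section GraphTool
open SpecTool

variable {V : Type*} [Fintype V] [DecidableEq V]

lemma adjMatrix_irrel (G : SimpleGraph V) (h1 h2 : DecidableRel G.Adj) :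
    @SimpleGraph.adjMatrix ℝ V G h1 _ = @SimpleGraph.adjMatrix ℝ V G h2 _ := by
  have : h1 = h2 := Subsingleton.elim h1 h2
  rw [this]

lemma adjMatrix_nonneg (G : SimpleGraph V) [DecidableRel G.Adj] (i j : V) :
    0 ≤ G.adjMatrix ℝ i j := by
  by_cases h : G.Adj i j <;> simp [h]

lemma sum_erase_vertex (v : V) (f : V → ℝ) (hf : f v = 0) :
    ∑ u : ↥({v}ᶜ : Set V), f ↑u = ∑ u, f u := by
  rw [Finset.sum_set_coe (f := f)]
  apply Finset.sum_subset (Finset.subset_univ _)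
  intro x _ hx
  simp only [Set.mem_toFinset, Set.mem_compl_iff, Set.mem_singleton_iff, not_not] at hx
  rw [hx]
  exact hf

lemma quad_restrict (B : Matrix V V ℝ) (v : V)
    (A' : Matrix ↥({v}ᶜ : Set V) ↥({v}ᶜ : Set V) ℝ)
    (hAB : ∀ a b : ↥({v}ᶜ : Set V), A' a b = B ↑a ↑b)
    (x : V → ℝ) (hx : x v = 0) :
    x ⬝ᵥ (B *ᵥ x) = (fun u : ↥({v}ᶜ : Set V) => x ↑u) ⬝ᵥ
      (A' *ᵥ fun u : ↥({v}ᶜ : Set V) => x ↑u) := by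
  rw [dotProduct, dotProduct]
  rw [← sum_erase_vertex v (fun u => x u * (B *ᵥ x) u)
    (by show x v * _ = 0; rw [hx, zero_mul])]
  apply Finset.sum_congr rfl
  intro u _
  congr 1
  rw [mulVec, mulVec, dotProduct, dotProduct]
  rw [← sum_erase_vertex v (fun w => B ↑u w * x w)
    (by show B ↑u v * x v = 0; rw [hx, mul_zero])]
  exact Finset.sum_congr rfl fun w _ => by rw [hAB]

lemma normsq_restrict (v : V) (x : V → ℝ) (hx : x v = 0) :
    x ⬝ᵥ x = (fun u : ↥({v}ᶜ : Set V) => x ↑u) ⬝ᵥ (fun u : ↥({v}ᶜ : Set V) => x ↑u) := by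
  rw [dotProduct, dotProduct]
  rw [← sum_erase_vertex v (fun u => x u * x u)
    (by show x v * x v = 0; rw [hx, zero_mul])]

lemma zero_propagation (G : SimpleGraph V) [DecidableRel G.Adj] (hG : G.Connected)
    (lam : ℝ) (z : V → ℝ) (hz : ∀ u, 0 ≤ z u)
    (heig : (G.adjMatrix ℝ) *ᵥ z = lam • z) (w : V) (hw : z w = 0) : z = 0 := by
  have step : ∀ a c : V, G.Adj a c → z a = 0 → z c = 0 := by
    intro a c hac hza
    have h1 : (G.adjMatrix ℝ *ᵥ z) a = 0 := by rw [heig, Pi.smul_apply, hza, smul_eq_mul, mul_zero]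
    rw [SimpleGraph.adjMatrix_mulVec_apply] at h1
    have := (Finset.sum_eq_zero_iff_of_nonneg (fun u _ => hz u)).1 h1 c
      (by rwa [SimpleGraph.mem_neighborFinset])
    exact this
  have key : ∀ (a b : V), G.Walk a b → z a = 0 → z b = 0 := by
    intro a b p
    induction p with
    | nil => exact fun h => h
    | cons h p ih => exact fun hza => ih (step _ _ h hza)
  funext v
  show z v = 0
  obtain ⟨p⟩ := hG.preconnected w v
  exact key w v p hw

end GraphTool

section SortTool
set_option linter.unusedSectionVars false
variable {n : Type*} [Fintype n] (ev : n → ℝ)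

abbrev slist : List ℝ := Multiset.sort (Finset.univ.val.map ev) (· ≤ ·)

lemma slist_length : (slist ev).length = Fintype.card n := by
  rw [Multiset.length_sort, Multiset.card_map]
  rfl

lemma slist_coe : ↑(slist ev) = Finset.univ.val.map ev := Multiset.sort_eq _ _

lemma slist_sorted : (slist ev).Pairwise (· ≤ ·) := Multiset.pairwise_sort _ _

lemma slist_mem {k : ℕ} (hk : k < (slist ev).length) :
    ∃ i, ev i = (slist ev).getD k 0 := by
  rw [List.getD_eq_get _ _ ⟨k, hk⟩]
  have hmem : (slist ev).get ⟨k, hk⟩ ∈ (slist ev) := List.get_mem _ _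
  rw [← Multiset.mem_coe, slist_coe, Multiset.mem_map] at hmem
  obtain ⟨i, _, hi⟩ := hmem
  exact ⟨i, hi⟩

lemma slist_mono {k m : ℕ} (hk : k ≤ m) (hm : m < (slist ev).length) :
    (slist ev).getD k 0 ≤ (slist ev).getD m 0 := by
  rw [List.getD_eq_get _ _ ⟨m, hm⟩, List.getD_eq_get _ _ ⟨k, lt_of_le_of_lt hk hm⟩]
  exact (slist_sorted ev).rel_get_of_le (by exact hk)

lemma le_slist_last (i : n) [Nonempty n] :
    ev i ≤ (slist ev).getD ((slist ev).length - 1) 0 := by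
  have hlen : 0 < (slist ev).length := by
    rw [slist_length]; exact Fintype.card_pos
  have hmem : ev i ∈ slist ev := by
    rw [← Multiset.mem_coe, slist_coe, Multiset.mem_map]
    exact ⟨i, Finset.mem_univ_val _, rfl⟩
  obtain ⟨idx, hidx⟩ := List.mem_iff_get.1 hmem
  rw [← hidx, List.getD_eq_get _ _ ⟨(slist ev).length - 1, by omega⟩]
  exact (slist_sorted ev).rel_get_of_le (by exact Nat.le_sub_one_of_lt idx.2)

lemma slist_two (h2 : 2 ≤ Fintype.card n)
    (heq : (slist ev).getD (Fintype.card n - 2) 0 = (slist ev).getD (Fintype.card n - 1) 0) :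
    ∃ i j, i ≠ j ∧ ev i = (slist ev).getD (Fintype.card n - 1) 0
      ∧ ev j = (slist ev).getD (Fintype.card n - 1) 0 := by
  set a := (slist ev).getD (Fintype.card n - 1) 0 with ha
  have hlen : (slist ev).length = Fintype.card n := slist_length ev
  have h1 : Fintype.card n - 2 < (slist ev).length := by omega
  have h2' : Fintype.card n - 1 < (slist ev).length := by omega
  have hdup : (slist ev).Duplicate a := by
    rw [List.duplicate_iff_exists_distinct_get]
    refine ⟨⟨Fintype.card n - 2, h1⟩, ⟨Fintype.card n - 1, h2'⟩, ?_, ?_, ?_⟩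
    · show (Fintype.card n - 2 : ℕ) < Fintype.card n - 1
      omega
    · rw [← List.getD_eq_get _ 0 ⟨_, h1⟩, ← heq]
    · rw [← List.getD_eq_get _ 0 ⟨_, h2'⟩]
  rw [List.duplicate_iff_two_le_count] at hdup
  have hcount : 2 ≤ Multiset.count a (Finset.univ.val.map ev) := by
    rw [← slist_coe ev, Multiset.coe_count]
    exact hdup
  rw [Multiset.count_map] at hcount
  have hcard : 1 < (Finset.univ.filter (fun i => a = ev i)).card := by
    rw [Finset.card_def, Finset.filter_val]
    exact hcount
  obtain ⟨i, hi, j, hj, hij⟩ := Finset.one_lt_card.1 hcard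
  rw [Finset.mem_filter] at hi hj
  exact ⟨i, j, hij, hi.2.symm, hj.2.symm⟩

end SortTool

-- main theorem development (to be appended after toolkit)
section Main
open SpecTool

variable {V : Type*} [Fintype V] [DecidableEq V]

lemma grho_eq (H : SimpleGraph V) :
    grho H = letI := Classical.decRel H.Adj; specRad (H.adjMatrix ℝ) := rfl

theorem lambdaTwo_lt_rhoV_le_rhoE_aux
    (G : SimpleGraph V)
    (hG : G.Connected) (hcard : 2 ≤ Fintype.card V) :
    lambdaTwo G < sSup {r : ℝ | ∃ v : V, r = grho (G.induce ({v}ᶜ : Set V))} ∧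
    sSup {r : ℝ | ∃ v : V, r = grho (G.induce ({v}ᶜ : Set V))} ≤
      sSup {r : ℝ | ∃ e ∈ G.edgeSet, r = grho (G.deleteEdges {e})} := by
  letI instG : DecidableRel G.Adj := Classical.decRel G.Adj
  haveI hNV : Nonempty V := Fintype.card_pos_iff.mp (by omega)
  set SV := {r : ℝ | ∃ v : V, r = grho (G.induce ({v}ᶜ : Set V))} with hSV
  set SE := {r : ℝ | ∃ e ∈ G.edgeSet, r = grho (G.deleteEdges {e})} with hSE
  have hSVfin : SV.Finite := by
    have : SV = Set.range (fun v : V => grho (G.induce ({v}ᶜ : Set V))) := by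
      ext r; simp [hSV, Set.mem_range, eq_comm]
    rw [this]; exact Set.finite_range _
  have hSEfin : SE.Finite := by
    have : SE = (fun e => grho (G.deleteEdges {e})) '' G.edgeSet := by
      ext r
      simp only [hSE, Set.mem_setOf_eq, Set.mem_image]
      constructor
      · rintro ⟨e, he, rfl⟩; exact ⟨e, he, rfl⟩
      · rintro ⟨e, he, rfl⟩; exact ⟨e, he, rfl⟩
    rw [this]
    exact Set.Finite.image _ (Set.toFinite _)
  -- nonempty subtype for each v
  have hsub : ∀ v : V, Nonempty ↥({v}ᶜ : Set V) := by
    intro v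
    have : Nontrivial V := Fintype.one_lt_card_iff_nontrivial.1 (by omega)
    obtain ⟨w, hw⟩ := exists_ne v
    exact ⟨⟨w, by simp [hw]⟩⟩
  -- every vertex has a neighbor
  have hadj : ∀ v : V, ∃ u, G.Adj v u := by
    intro v
    have : Nontrivial V := Fintype.one_lt_card_iff_nontrivial.1 (by omega)
    obtain ⟨w, hw⟩ := exists_ne v
    obtain ⟨p⟩ := hG.preconnected v w
    cases p with
    | nil => exact absurd rfl hw.symm
    | cons h _ => exact ⟨_, h⟩
  constructor
  · -- Part 1: lambdaTwo G < sSup SV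
    by_contra hcon
    push_neg at hcon
    have hA := adjMatrix_isHermitian G
    set ev := hA.eigenvalues with hev
    set lam2 := lambdaTwo G with hlam2
    have hlam2' : lam2 = (slist ev).getD (Fintype.card V - 2) 0 := rfl
    set lam1 := (slist ev).getD (Fintype.card V - 1) 0 with hlam1
    have hlen : (slist ev).length = Fintype.card V := slist_length ev
    have hmax : ∀ i, ev i ≤ lam1 := by
      intro i
      have := le_slist_last ev i
      rwa [hlen] at this
    have hl2l1 : lam2 ≤ lam1 := by
      rw [hlam2']
      exact slist_mono ev (by omega) (by omega)
    obtain ⟨j0, hj0⟩ := slist_mem ev (show Fintype.card V - 1 < (slist ev).length by omega)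
    obtain ⟨i0, hi0⟩ := slist_mem ev (show Fintype.card V - 2 < (slist ev).length by omega)
    rw [← hlam1] at hj0
    rw [← hlam2'] at hi0
    have hdotnn : ∀ (W : Type _) [Fintype W] (x : W → ℝ), (0:ℝ) ≤ x ⬝ᵥ x := by
      intro W _ x
      exact Finset.sum_nonneg fun i _ => mul_self_nonneg _
    -- the quadratic bound from the contradiction hypothesis
    have hS : ∀ (v : V) (x : V → ℝ), x v = 0 →
        x ⬝ᵥ (G.adjMatrix ℝ *ᵥ x) ≤ lam2 * (x ⬝ᵥ x) := by
      intro v x hx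
      letI instI : DecidableRel (G.induce ({v}ᶜ : Set V)).Adj := Classical.decRel _
      haveI := hsub v
      set A' := (G.induce ({v}ᶜ : Set V)).adjMatrix ℝ with hA'def
      have hA' := adjMatrix_isHermitian (G.induce ({v}ᶜ : Set V))
      have hAB : ∀ a b : ↥({v}ᶜ : Set V), A' a b = (G.adjMatrix ℝ) ↑a ↑b := by
        intro a b
        rw [hA'def]
        by_cases h : G.Adj ↑a ↑b
        · rw [SimpleGraph.adjMatrix_apply, SimpleGraph.adjMatrix_apply, if_pos h,
            if_pos (by exact h)]
        · rw [SimpleGraph.adjMatrix_apply, SimpleGraph.adjMatrix_apply, if_neg h,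
            if_neg (by exact h)]
      have hgr : grho (G.induce ({v}ᶜ : Set V)) ≤ lam2 :=
        le_trans (le_csSup hSVfin.bddAbove ⟨v, rfl⟩) hcon
      rw [grho_eq] at hgr
      have hq := quad_restrict (G.adjMatrix ℝ) v A' hAB x hx
      have hb := quad_le_specRad hA' (fun u : ↥({v}ᶜ : Set V) => x ↑u)
      have hnn := hdotnn ↥({v}ᶜ : Set V) (fun u : ↥({v}ᶜ : Set V) => x ↑u)
      calc x ⬝ᵥ (G.adjMatrix ℝ *ᵥ x)
          = (fun u : ↥({v}ᶜ : Set V) => x ↑u) ⬝ᵥ (A' *ᵥ fun u : ↥({v}ᶜ : Set V) => x ↑u) := hq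
        _ ≤ specRad A' * ((fun u : ↥({v}ᶜ : Set V) => x ↑u) ⬝ᵥ fun u : ↥({v}ᶜ : Set V) => x ↑u) := hb
        _ ≤ lam2 * ((fun u : ↥({v}ᶜ : Set V) => x ↑u) ⬝ᵥ fun u : ↥({v}ᶜ : Set V) => x ↑u) :=
            mul_le_mul_of_nonneg_right hgr hnn
        _ = lam2 * (x ⬝ᵥ x) := by rw [← normsq_restrict v x hx]
    -- lam1 is nonnegative
    have hlam1nn : 0 ≤ lam1 := by
      have v : V := Classical.arbitrary V
      have h1 := quad_le hA lam1 hmax (Pi.single v 1)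
      rw [dotProduct_single, mulVec_single] at h1
      have h2 : (Pi.single v 1 : V → ℝ) ⬝ᵥ (MulOpposite.op (1:ℝ) • (G.adjMatrix ℝ).col v) = 0 := by
        rw [single_dotProduct]
        simp
      rw [h2] at h1
      have h3 : (Pi.single v 1 : V → ℝ) v * 1 = 1 := by simp
      rw [h3, mul_one] at h1
      exact h1
    -- simplicity of the top eigenvalue
    have hsimple : lam2 < lam1 := by
      rcases lt_or_eq_of_le hl2l1 with h | h
      · exact h
      · exfalso
        obtain ⟨i, j, hij, hi, hj⟩ := slist_two ev hcard (by rw [← hlam1, ← h, hlam2'])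
        rw [← hlam1] at hi hj
        set p := ⇑(hA.eigenvectorBasis i) with hpdef
        set q := ⇑(hA.eigenvectorBasis j) with hqdef
        have hp : G.adjMatrix ℝ *ᵥ p = lam1 • p := by
          rw [hpdef, hA.mulVec_eigenvectorBasis]
          rw [show hA.eigenvalues i = lam1 from hi]
        have hq : G.adjMatrix ℝ *ᵥ q = lam1 • q := by
          rw [hqdef, hA.mulVec_eigenvectorBasis]
          rw [show hA.eigenvalues j = lam1 from hj]
        -- eigenvectors of lam1 never vanish
        have hnv : ∀ (x : V → ℝ), G.adjMatrix ℝ *ᵥ x = lam1 • x → x ≠ 0 → ∀ v, x v ≠ 0 := by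
          intro x hx hx0 v hv
          set z : V → ℝ := fun u => |x u| with hzdef
          have hzz : z ⬝ᵥ z = x ⬝ᵥ x := by
            rw [dotProduct, dotProduct]
            exact Finset.sum_congr rfl fun u _ => abs_mul_abs_self _
          have hquadx : x ⬝ᵥ (G.adjMatrix ℝ *ᵥ x) = lam1 * (x ⬝ᵥ x) := by
            rw [hx, dotProduct_smul, smul_eq_mul]
          have h1 : lam1 * (x ⬝ᵥ x) ≤ z ⬝ᵥ (G.adjMatrix ℝ *ᵥ z) := by
            calc lam1 * (x ⬝ᵥ x) = |lam1 * (x ⬝ᵥ x)| :=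
                  (abs_of_nonneg (mul_nonneg hlam1nn (hdotnn V x))).symm
              _ = |x ⬝ᵥ (G.adjMatrix ℝ *ᵥ x)| := by rw [hquadx]
              _ ≤ _ := abs_quad_le (fun a b => adjMatrix_nonneg G a b) x
          have h2 : z ⬝ᵥ (G.adjMatrix ℝ *ᵥ z) ≤ lam1 * (z ⬝ᵥ z) := quad_le hA lam1 hmax z
          have heq : z ⬝ᵥ (G.adjMatrix ℝ *ᵥ z) = lam1 * (z ⬝ᵥ z) := by
            rw [hzz]
            exact le_antisymm (by rw [← hzz]; exact h2) h1
          have hze : G.adjMatrix ℝ *ᵥ z = lam1 • z := eigen_of_quad_eq hA lam1 hmax z heq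
          have hz0 : z = 0 := zero_propagation G hG lam1 z (fun u => abs_nonneg _) hze v
            (by rw [hzdef]; simp only; rw [hv, abs_zero])
          apply hx0
          funext u
          have := congrFun hz0 u
          simp only [hzdef, Pi.zero_apply] at this
          exact abs_eq_zero.1 this
        have v0 : V := Classical.arbitrary V
        set w : V → ℝ := (q v0) • p - (p v0) • q with hwdef
        have hweig : G.adjMatrix ℝ *ᵥ w = lam1 • w := by
          rw [hwdef, mulVec_sub, mulVec_smul, mulVec_smul, hp, hq]
          funext u
          simp only [Pi.sub_apply, Pi.smul_apply, smul_eq_mul]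
          ring
        have hwv0 : w v0 = 0 := by
          simp only [hwdef, Pi.sub_apply, Pi.smul_apply, smul_eq_mul]
          ring
        have hw0 : w ≠ 0 := by
          intro h0
          have hpw : p ⬝ᵥ w = 0 := by rw [h0, dotProduct_zero]
          have hppi : p ⬝ᵥ p = 1 := basis_normsq hA i
          have hpqj : p ⬝ᵥ q = 0 := basis_dot hA hij
          rw [hwdef, dotProduct_sub, dotProduct_smul, dotProduct_smul, smul_eq_mul,
            smul_eq_mul, hppi, hpqj] at hpw
          have hq0 : q v0 = 0 := by linarith
          exact hnv q hq (basis_ne_zero hA j) v0 hq0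
        exact hnv w hweig hw0 v0 hwv0
    -- final contradiction
    have hi0j0 : i0 ≠ j0 := by
      intro h
      rw [h, hj0] at hi0
      exact absurd hi0 (ne_of_lt hsimple).symm
    set p := ⇑(hA.eigenvectorBasis j0) with hpdef
    have hpe : G.adjMatrix ℝ *ᵥ p = lam1 • p := by
      rw [hpdef, hA.mulVec_eigenvectorBasis]
      rw [show hA.eigenvalues j0 = lam1 from hj0]
    have hppos : ∀ v, p v ≠ 0 := by
      intro v hv
      have h1 := hS v p hv
      have hpp1 : p ⬝ᵥ p = 1 := basis_normsq hA j0
      rw [hpe, dotProduct_smul, smul_eq_mul, hpp1] at h1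
      linarith [hsimple]
    set q := ⇑(hA.eigenvectorBasis i0) with hqdef
    have hqe : G.adjMatrix ℝ *ᵥ q = lam2 • q := by
      rw [hqdef, hA.mulVec_eigenvectorBasis]
      rw [show hA.eigenvalues i0 = lam2 from hi0]
    obtain ⟨v, hqv⟩ := Function.ne_iff.1 (basis_ne_zero hA i0)
    rw [← hqdef] at hqv
    set x : V → ℝ := (p v) • q - (q v) • p with hxdef
    have hxv : x v = 0 := by
      simp only [hxdef, Pi.sub_apply, Pi.smul_apply, smul_eq_mul]
      ring
    have hkey := hS v x hxv
    have hqq : q ⬝ᵥ q = 1 := basis_normsq hA i0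
    have hpp : p ⬝ᵥ p = 1 := basis_normsq hA j0
    have hpq : p ⬝ᵥ q = 0 := basis_dot hA (Ne.symm hi0j0)
    have hqp : q ⬝ᵥ p = 0 := basis_dot hA hi0j0
    have hAx : G.adjMatrix ℝ *ᵥ x = (p v) • (lam2 • q) - (q v) • (lam1 • p) := by
      rw [hxdef, mulVec_sub, mulVec_smul, mulVec_smul, hqe, hpe]
    have e1 : x ⬝ᵥ (G.adjMatrix ℝ *ᵥ x) = (p v)^2 * lam2 + (q v)^2 * lam1 := by
      rw [hAx, hxdef]
      rw [sub_dotProduct, smul_dotProduct, smul_dotProduct, dotProduct_sub, dotProduct_sub,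
        dotProduct_smul, dotProduct_smul, dotProduct_smul, dotProduct_smul,
        dotProduct_smul, dotProduct_smul, dotProduct_smul, dotProduct_smul,
        hqq, hpp, hpq, hqp]
      simp only [smul_eq_mul]
      ring
    have e2 : x ⬝ᵥ x = (p v)^2 + (q v)^2 := by
      rw [hxdef]
      rw [sub_dotProduct, smul_dotProduct, smul_dotProduct, dotProduct_sub, dotProduct_sub,
        dotProduct_smul, dotProduct_smul, dotProduct_smul, dotProduct_smul,
        hqq, hpp, hpq, hqp]
      simp only [smul_eq_mul]
      ring
    rw [e1, e2] at hkey
    have hqv2 : 0 < (q v)^2 := lt_of_le_of_ne (sq_nonneg _) (Ne.symm (pow_ne_zero 2 hqv))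
    nlinarith [hkey, hqv2, hsimple]
  · -- Part 2
    have hSVne : SV.Nonempty :=
      ⟨grho (G.induce (({Classical.arbitrary V}ᶜ : Set V))), ⟨Classical.arbitrary V, rfl⟩⟩
    apply csSup_le hSVne
    rintro r ⟨v, rfl⟩
    obtain ⟨u, hvu⟩ := hadj v
    have he : s(v, u) ∈ G.edgeSet := (G.mem_edgeSet).2 hvu
    have hle2 : grho (G.deleteEdges {s(v, u)}) ≤ sSup SE :=
      le_csSup hSEfin.bddAbove ⟨s(v, u), he, rfl⟩
    refine le_trans ?_ hle2
    -- now the spectral comparison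
    letI instI : DecidableRel (G.induce ({v}ᶜ : Set V)).Adj :=
      Classical.decRel _
    letI instD : DecidableRel (G.deleteEdges ({s(v, u)} : Set (Sym2 V))).Adj :=
      Classical.decRel _
    rw [grho_eq, grho_eq]
    set A' := (G.induce ({v}ᶜ : Set V)).adjMatrix ℝ with hA'def
    set B := (G.deleteEdges ({s(v, u)} : Set (Sym2 V))).adjMatrix ℝ with hBdef
    have hA' := adjMatrix_isHermitian (G.induce ({v}ᶜ : Set V))
    have hB := adjMatrix_isHermitian (G.deleteEdges ({s(v, u)} : Set (Sym2 V)))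
    haveI := hsub v
    obtain ⟨i, hi⟩ := exists_specRad hA'
    set y : ↥({v}ᶜ : Set V) → ℝ := ⇑(hA'.eigenvectorBasis i) with hydef
    have hy1 : y ⬝ᵥ y = 1 := basis_normsq hA' i
    have hAy : A' *ᵥ y = hA'.eigenvalues i • y := hA'.mulVec_eigenvectorBasis i
    set Z : V → ℝ := fun w => if h : w ∈ ({v}ᶜ : Set V) then |y ⟨w, h⟩| else 0 with hZdef
    have hZv : Z v = 0 := dif_neg (by simp)
    have hZa : ∀ a : ↥({v}ᶜ : Set V), Z ↑a = |y a| := by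
      intro a; rw [hZdef]; simp only; rw [dif_pos a.2]
    have hAB : ∀ a b : ↥({v}ᶜ : Set V), A' a b = B ↑a ↑b := by
      intro a b
      have hiff : (G.induce ({v}ᶜ : Set V)).Adj a b ↔
          (G.deleteEdges ({s(v, u)} : Set (Sym2 V))).Adj ↑a ↑b := by
        rw [SimpleGraph.deleteEdges_adj]
        simp only [SimpleGraph.comap_adj, Function.Embedding.coe_subtype]
        constructor
        · intro h
          refine ⟨h, ?_⟩
          intro hmem
          rw [Set.mem_singleton_iff, Sym2.eq_iff] at hmem
          have hav : (a : V) ≠ v := by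
            intro hc; have := a.2; rw [hc] at this; simp at this
          have hbv : (b : V) ≠ v := by
            intro hc; have := b.2; rw [hc] at this; simp at this
          rcases hmem with ⟨h1, _⟩ | ⟨_, h2⟩
          · exact hav h1
          · exact hbv h2
        · intro h; exact h.1
      rw [hA'def, hBdef]
      by_cases h : (G.induce ({v}ᶜ : Set V)).Adj a b
      · rw [SimpleGraph.adjMatrix_apply, SimpleGraph.adjMatrix_apply, if_pos h,
          if_pos (hiff.1 h)]
      · rw [SimpleGraph.adjMatrix_apply, SimpleGraph.adjMatrix_apply, if_neg h,
          if_neg (fun hc => h (hiff.2 hc))]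
    -- key computation
    have habs : ∀ a : ↥({v}ᶜ : Set V), (fun w => Z ↑w) a = |y a| := fun a => hZa a
    have hZfun : (fun a : ↥({v}ᶜ : Set V) => Z ↑a) = fun a => |y a| := funext hZa
    have step1 : specRad A' * (y ⬝ᵥ y) ≤ Z ⬝ᵥ (B *ᵥ Z) := by
      rw [hi]
      have h1 : |hA'.eigenvalues i| * (y ⬝ᵥ y) = |y ⬝ᵥ (A' *ᵥ y)| := by
        rw [hAy, dotProduct_smul, smul_eq_mul, abs_mul, abs_of_nonneg (by rw [hy1]; norm_num : (0:ℝ) ≤ y ⬝ᵥ y)]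
      rw [h1]
      have h2 := abs_quad_le (A := A') (fun a b => by
        rw [hA'def]; exact adjMatrix_nonneg _ a b) y
      refine le_trans h2 ?_
      rw [quad_restrict B v A' hAB Z hZv, hZfun]
    have step2 : Z ⬝ᵥ (B *ᵥ Z) ≤ specRad B * (y ⬝ᵥ y) := by
      have h3 := quad_le_specRad hB Z
      have h4 : Z ⬝ᵥ Z = y ⬝ᵥ y := by
        rw [normsq_restrict v Z hZv, hZfun, dotProduct, dotProduct]
        exact Finset.sum_congr rfl fun a _ => by rw [abs_mul_abs_self]
      rw [← h4]; exact h3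
    have := le_trans step1 step2
    rw [hy1, mul_one, mul_one] at this
    exact this

end Main

end Toolkit

/-- `λ₂(G) < max_{v} ρ(G−v) ≤ max_{e} ρ(G−e)` for a connected graph with at
least two vertices. -/
theorem lambdaTwo_lt_rhoV_le_rhoE
    {V : Type*} [Fintype V] [DecidableEq V] (G : SimpleGraph V)
    (hG : G.Connected) (hcard : 2 ≤ Fintype.card V) :
    lambdaTwo G < sSup {r : ℝ | ∃ v : V, r = grho (G.induce ({v}ᶜ : Set V))} ∧
    sSup {r : ℝ | ∃ v : V, r = grho (G.induce ({v}ᶜ : Set V))} ≤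
      sSup {r : ℝ | ∃ e ∈ G.edgeSet, r = grho (G.deleteEdges {e})} :=
  lambdaTwo_lt_rhoV_le_rhoE_aux G hG hcard
end

section
/- Let G be a connected finite simple graph that is not bipartite, and let λ_min(G) denote the smallest eigenvalue of its adjacency matrix. Then −λ_min(G) < max_{e ∈ E} ρ(G−e). -/
set_option linter.unusedSectionVars false
set_option linter.unnecessarySimpa false
set_option linter.unreachableTactic false
set_option linter.unusedTactic false
set_option maxHeartbeats 1000000


open Matrix Finset
open scoped Classical

/-- smallest adjacency eigenvalue -/
noncomputable def lamMin {V : Type*} [Fintype V] [DecidableEq V] (G : SimpleGraph V) : ℝ :=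
  letI := Classical.decRel G.Adj
  sInf {μ : ℝ | IsEigenval (G.adjMatrix ℝ) μ}

noncomputable section

namespace SpecCore
variable {V : Type*} [Fintype V] [DecidableEq V]
def qf (B : Matrix V V ℝ) (x : V → ℝ) : ℝ := ∑ i, B.mulVec x i * x i
def matCLM (B : Matrix V V ℝ) : EuclideanSpace ℝ V →L[ℝ] EuclideanSpace ℝ V :=
  LinearMap.toContinuousLinearMap (Matrix.toEuclideanLin B)
lemma matCLM_apply (B : Matrix V V ℝ) (x : V → ℝ) :
    matCLM B ((WithLp.equiv 2 (V → ℝ)).symm x) = (WithLp.equiv 2 (V → ℝ)).symm (B.mulVec x) := rfl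
lemma inner_eq (x y : V → ℝ) :
    (inner ℝ ((WithLp.equiv 2 (V → ℝ)).symm x) ((WithLp.equiv 2 (V → ℝ)).symm y) : ℝ)
      = ∑ i, x i * y i := by
  simp [PiLp.inner_apply, RCLike.inner_apply, mul_comm]
lemma matCLM_selfAdjoint (B : Matrix V V ℝ) (hB : Bᵀ = B) : IsSelfAdjoint (matCLM B) := by
  have hH : B.IsHermitian := hB
  have := Matrix.isHermitian_iff_isSymmetric.mp hH
  exact LinearMap.IsSymmetric.isSelfAdjoint (by rwa [matCLM, LinearMap.coe_toContinuousLinearMap])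
lemma reApply_eq (B : Matrix V V ℝ) (x : V → ℝ) :
    (matCLM B).reApplyInnerSelf ((WithLp.equiv 2 (V → ℝ)).symm x) = qf B x := by
  rw [ContinuousLinearMap.reApplyInnerSelf_apply, matCLM_apply]
  rw [show (RCLike.re : ℝ →+ ℝ) = AddMonoidHom.id ℝ from rfl]
  simp [inner_eq, qf, mul_comm, PiLp.inner_apply]
lemma norm_eq_one (x : V → ℝ) (hx : ∑ i, x i * x i = 1) :
    ‖(WithLp.equiv 2 (V → ℝ)).symm x‖ = 1 := by
  have h1 : (inner ℝ ((WithLp.equiv 2 (V → ℝ)).symm x) ((WithLp.equiv 2 (V → ℝ)).symm x) : ℝ) = 1 := by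
    rw [inner_eq]; exact hx
  have h2 := real_inner_self_eq_norm_mul_norm ((WithLp.equiv 2 (V → ℝ)).symm x)
  nlinarith [norm_nonneg ((WithLp.equiv 2 (V → ℝ)).symm x)]
lemma sum_sq_eq_one (x : EuclideanSpace ℝ V) (hx : ‖x‖ = 1) :
    ∑ i, (WithLp.equiv 2 (V → ℝ)) x i * (WithLp.equiv 2 (V → ℝ)) x i = 1 := by
  have h1 : (inner ℝ x x : ℝ) = 1 := by
    rw [real_inner_self_eq_norm_mul_norm, hx]; ring
  rw [← h1]
  have := inner_eq ((WithLp.equiv 2 (V → ℝ)) x) ((WithLp.equiv 2 (V → ℝ)) x)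
  simpa using this.symm
lemma eigen_of_min (B : Matrix V V ℝ) (hB : Bᵀ = B) (y : V → ℝ)
    (hy : ∑ i, y i * y i = 1)
    (hmin : ∀ x : V → ℝ, qf B y * (∑ i, x i * x i) ≤ qf B x) :
    B.mulVec y = qf B y • y := by
  set ycap := (WithLp.equiv 2 (V → ℝ)).symm y with hycap
  have hny : ‖ycap‖ = 1 := norm_eq_one y hy
  have hmin' : IsMinOn (matCLM B).reApplyInnerSelf (Metric.sphere (0 : EuclideanSpace ℝ V) ‖ycap‖) ycap := by
    intro x hx
    have hxn : ‖x‖ = 1 := by simpa [hny] using (mem_sphere_zero_iff_norm.mp hx)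
    have hxs := sum_sq_eq_one x hxn
    have hre : (matCLM B).reApplyInnerSelf x = qf B ((WithLp.equiv 2 (V → ℝ)) x) := by
      have := reApply_eq B ((WithLp.equiv 2 (V → ℝ)) x)
      simpa using this
    have hrey : (matCLM B).reApplyInnerSelf ycap = qf B y := reApply_eq B y
    simp only [Set.mem_setOf_eq, hre, hrey]
    have := hmin ((WithLp.equiv 2 (V → ℝ)) x)
    rw [hxs, mul_one] at this
    exact this
  have hy0 : ycap ≠ 0 := by
    intro h; rw [h] at hny; simp at hny
  have heig := (matCLM_selfAdjoint B hB).eq_smul_self_of_isLocalExtrOn (Or.inl hmin'.localize)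
  have hrq : (matCLM B).rayleighQuotient ycap = qf B y := by
    rw [ContinuousLinearMap.rayleighQuotient, reApply_eq, hny]; simp
  rw [hrq] at heig
  have : (WithLp.equiv 2 (V → ℝ)).symm (B.mulVec y) = (WithLp.equiv 2 (V → ℝ)).symm (qf B y • y) := by
    rw [← matCLM_apply]
    rw [heig]
    simp [hycap]
  exact (WithLp.equiv 2 (V → ℝ)).symm.injective this

lemma sum_sq_pos (x : V → ℝ) (hx : x ≠ 0) : 0 < ∑ i, x i * x i := by
  obtain ⟨i, hi⟩ : ∃ i, x i ≠ 0 := by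
    by_contra h; push_neg at h; exact hx (funext h)
  refine Finset.sum_pos' (fun j _ => mul_self_nonneg _) ⟨i, Finset.mem_univ i, ?_⟩
  exact mul_self_pos.mpr hi

lemma qf_smul (B : Matrix V V ℝ) (c : ℝ) (x : V → ℝ) : qf B (c • x) = c ^ 2 * qf B x := by
  simp only [qf, Matrix.mulVec_smul]
  rw [Finset.mul_sum]
  refine Finset.sum_congr rfl fun i _ => ?_
  simp [Pi.smul_apply, smul_eq_mul]; ring

/-- Master lemma: the Rayleigh minimum is attained at an eigenvalue. -/
lemma exists_min_eig [Nonempty V] (B : Matrix V V ℝ) (hB : Bᵀ = B) :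
    ∃ m : ℝ, IsEigenval B m ∧ ∀ x : V → ℝ, m * (∑ i, x i * x i) ≤ qf B x := by
  -- compactness
  have hcomp : IsCompact (Metric.sphere (0 : EuclideanSpace ℝ V) 1) := isCompact_sphere _ _
  have hne : (Metric.sphere (0 : EuclideanSpace ℝ V) 1).Nonempty := by
    refine ⟨EuclideanSpace.single (Classical.arbitrary V) (1:ℝ), ?_⟩
    simp [mem_sphere_zero_iff_norm, EuclideanSpace.norm_single]
  obtain ⟨ycap, hymem, hymin⟩ := hcomp.exists_isMinOn hne (matCLM B).reApplyInnerSelf_continuous.continuousOn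
  set y := (WithLp.equiv 2 (V → ℝ)) ycap with hy
  have hyn : ‖ycap‖ = 1 := mem_sphere_zero_iff_norm.mp hymem
  have hys : ∑ i, y i * y i = 1 := sum_sq_eq_one ycap hyn
  set m := qf B y with hm
  have hmin : ∀ x : V → ℝ, m * (∑ i, x i * x i) ≤ qf B x := by
    intro x
    by_cases hx0 : x = 0
    · subst hx0; simp [qf, Matrix.mulVec_zero]
    · have hpos := sum_sq_pos x hx0
      set c := (Real.sqrt (∑ i, x i * x i))⁻¹ with hc
      have hsq : Real.sqrt (∑ i, x i * x i) ^ 2 = ∑ i, x i * x i := Real.sq_sqrt hpos.le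
      have hsqpos : 0 < Real.sqrt (∑ i, x i * x i) := Real.sqrt_pos.mpr hpos
      have hc2 : c ^ 2 = (∑ i, x i * x i)⁻¹ := by
        rw [hc, inv_pow, hsq]
      have hxs' : ∑ i, (c • x) i * (c • x) i = 1 := by
        simp only [Pi.smul_apply, smul_eq_mul]
        have h4 : ∑ i, c * x i * (c * x i) = c ^ 2 * ∑ i, x i * x i := by
          rw [Finset.mul_sum]; exact Finset.sum_congr rfl fun i _ => by ring
        rw [h4, hc2, inv_mul_cancel₀ hpos.ne']
      -- apply hymin to the unit vector
      have hmem' : (WithLp.equiv 2 (V → ℝ)).symm (c • x) ∈ Metric.sphere (0 : EuclideanSpace ℝ V) 1 := by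
        rw [mem_sphere_zero_iff_norm]; exact norm_eq_one _ hxs'
      have h1 : (matCLM B).reApplyInnerSelf ycap ≤ (matCLM B).reApplyInnerSelf ((WithLp.equiv 2 (V → ℝ)).symm (c • x)) := by
        have := hymin hmem'
        simpa [hyn] using this
      have h2 : (matCLM B).reApplyInnerSelf ycap = m := by
        have : ycap = (WithLp.equiv 2 (V → ℝ)).symm y := by simp [hy]
        rw [this, reApply_eq]
      rw [h2, reApply_eq, qf_smul] at h1
      have h3 : m ≤ c ^ 2 * qf B x := h1
      rw [hc2] at h3
      calc m * (∑ i, x i * x i) ≤ (∑ i, x i * x i)⁻¹ * qf B x * (∑ i, x i * x i) := by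
            apply mul_le_mul_of_nonneg_right h3 hpos.le
        _ = qf B x := by rw [mul_comm, ← mul_assoc, mul_inv_cancel₀ hpos.ne', one_mul]
  refine ⟨m, ⟨y, ?_, eigen_of_min B hB y hys hmin⟩, hmin⟩
  intro h
  rw [h] at hys; simp at hys

/-- Max version. -/
lemma exists_max_eig [Nonempty V] (B : Matrix V V ℝ) (hB : Bᵀ = B) :
    ∃ M : ℝ, IsEigenval B M ∧ ∀ x : V → ℝ, qf B x ≤ M * (∑ i, x i * x i) := by
  obtain ⟨m, ⟨z, hz0, hz⟩, hray⟩ := exists_min_eig (-B) (by rw [Matrix.transpose_neg, hB])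
  refine ⟨-m, ⟨z, hz0, ?_⟩, ?_⟩
  · rw [Matrix.neg_mulVec] at hz
    have : B.mulVec z = -(m • z) := by
      have := congrArg Neg.neg hz; simpa using this
    rw [this, ← neg_smul]
  · intro x
    have := hray x
    have hq : qf (-B) x = -qf B x := by
      simp [qf, Matrix.neg_mulVec, Finset.sum_neg_distrib]
    rw [hq] at this
    linarith

/-- Any eigenvalue lies between the Rayleigh extremes. -/
lemma eig_bounds (B : Matrix V V ℝ) {m M μ : ℝ}
    (hm : ∀ x : V → ℝ, m * (∑ i, x i * x i) ≤ qf B x)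
    (hM : ∀ x : V → ℝ, qf B x ≤ M * (∑ i, x i * x i))
    (hμ : IsEigenval B μ) : m ≤ μ ∧ μ ≤ M := by
  obtain ⟨x, hx0, hx⟩ := hμ
  have hpos := sum_sq_pos x hx0
  have hq : qf B x = μ * (∑ i, x i * x i) := by
    simp only [qf, hx]
    rw [Finset.mul_sum]
    exact Finset.sum_congr rfl fun i _ => by simp [smul_eq_mul]; ring
  constructor
  · have := hm x; rw [hq] at this; exact le_of_mul_le_mul_right this hpos
  · have := hM x; rw [hq] at this; exact le_of_mul_le_mul_right this hpos

/-- Key spectral radius bound: `-m ≤ specRad B` where `m` is the smallest eigenvalue. -/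
lemma specRad_facts [Nonempty V] (B : Matrix V V ℝ) (hB : Bᵀ = B) :
    ∃ m : ℝ, IsEigenval B m ∧ (∀ x : V → ℝ, m * (∑ i, x i * x i) ≤ qf B x) ∧ -m ≤ specRad B := by
  obtain ⟨m, hmeig, hm⟩ := exists_min_eig B hB
  obtain ⟨M, hMeig, hM⟩ := exists_max_eig B hB
  set K := max (-m) M with hK
  have hbdd : ∀ r ∈ {r : ℝ | ∃ μ : ℝ, IsEigenval B μ ∧ r = |μ|}, r ≤ K := by
    rintro r ⟨μ, hμ, rfl⟩
    obtain ⟨h1, h2⟩ := eig_bounds B hm hM hμ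
    rw [abs_le]
    constructor
    · have h3 : -K ≤ -(-m) := neg_le_neg (le_max_left _ _)
      have h4 : -(-m) = m := neg_neg m
      linarith
    · exact h2.trans (le_max_right _ _)
  have hmM : m ≤ M := (eig_bounds B hm hM hMeig).1
  have hKmem : K ∈ {r : ℝ | ∃ μ : ℝ, IsEigenval B μ ∧ r = |μ|} := by
    rcases le_total (-m) M with h | h
    · refine ⟨M, hMeig, ?_⟩
      rw [hK, max_eq_right h, abs_of_nonneg (by linarith)]
    · refine ⟨m, hmeig, ?_⟩
      rw [hK, max_eq_left h, abs_of_nonpos (by linarith)]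
  refine ⟨m, hmeig, hm, ?_⟩
  have : K ≤ specRad B := le_csSup ⟨K, hbdd⟩ hKmem
  linarith [le_max_left (-m) M]


lemma qf_of_eigen (B : Matrix V V ℝ) {μ : ℝ} (x : V → ℝ) (hx : B.mulVec x = μ • x) :
    qf B x = μ * ∑ i, x i * x i := by
  simp only [qf, hx]
  rw [Finset.mul_sum]
  exact Finset.sum_congr rfl fun i _ => by simp [smul_eq_mul]; ring

lemma exists_unit_eigen (B : Matrix V V ℝ) {μ : ℝ} (h : IsEigenval B μ) :
    ∃ y : V → ℝ, (∑ i, y i * y i) = 1 ∧ B.mulVec y = μ • y := by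
  obtain ⟨x, hx0, hx⟩ := h
  have hpos := sum_sq_pos x hx0
  have hsq : Real.sqrt (∑ i, x i * x i) ^ 2 = ∑ i, x i * x i := Real.sq_sqrt hpos.le
  set c := (Real.sqrt (∑ i, x i * x i))⁻¹ with hc
  have hc2 : c ^ 2 = (∑ i, x i * x i)⁻¹ := by rw [hc, inv_pow, hsq]
  refine ⟨c • x, ?_, ?_⟩
  · simp only [Pi.smul_apply, smul_eq_mul]
    have h4 : ∑ i, c * x i * (c * x i) = c ^ 2 * ∑ i, x i * x i := by
      rw [Finset.mul_sum]; exact Finset.sum_congr rfl fun i _ => by ring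
    rw [h4, hc2, inv_mul_cancel₀ hpos.ne']
  · rw [Matrix.mulVec_smul, hx, smul_comm]

/-- indicator matrix of a single (symmetric) edge -/
def Cm (u v : V) : Matrix V V ℝ :=
  Matrix.of fun i j => if s(i, j) = s(u, v) then (1 : ℝ) else 0

lemma Cm_mulVec (u v : V) (huv : u ≠ v) (x : V → ℝ) (i : V) :
    (Cm u v).mulVec x i = (if i = u then x v else 0) + (if i = v then x u else 0) := by
  have hterm : ∀ j, (if s(i, j) = s(u, v) then (1 : ℝ) else 0) * x j =
      (if i = u ∧ j = v then x j else 0) + (if i = v ∧ j = u then x j else 0) := by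
    intro j
    by_cases h1 : i = u <;> by_cases h2 : i = v <;> by_cases h3 : j = u <;> by_cases h4 : j = v <;>
      simp_all [Sym2.eq_iff] <;> tauto
  simp only [Cm, Matrix.mulVec, dotProduct, Matrix.of_apply]
  rw [Finset.sum_congr rfl fun j _ => hterm j, Finset.sum_add_distrib]
  congr 1
  · by_cases h1 : i = u
    · subst h1
      simp [Finset.sum_ite_eq']
    · simp [h1]
  · by_cases h2 : i = v
    · subst h2
      simp [Finset.sum_ite_eq']
    · simp [h2]

lemma qf_Cm (u v : V) (huv : u ≠ v) (x : V → ℝ) : qf (Cm u v) x = 2 * (x u * x v) := by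
  simp only [qf, Cm_mulVec u v huv]
  rw [Finset.sum_congr rfl fun i _ => show ((if i = u then x v else 0) + (if i = v then x u else 0)) * x i
      = (if i = u then x v * x i else 0) + (if i = v then x u * x i else 0) by
    by_cases h1 : i = u <;> by_cases h2 : i = v <;> simp [h1, h2, huv, huv.symm, Ne.symm huv]]
  rw [Finset.sum_add_distrib, Finset.sum_ite_eq' Finset.univ u, Finset.sum_ite_eq' Finset.univ v]
  simp; ring

lemma qf_add (B C : Matrix V V ℝ) (x : V → ℝ) : qf (B + C) x = qf B x + qf C x := by
  simp only [qf, Matrix.add_mulVec, Pi.add_apply, add_mul, Finset.sum_add_distrib]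

lemma adj_split (G : SimpleGraph V) [DecidableRel G.Adj]
    [DecidableRel (G.deleteEdges {s(u, v)}).Adj] {u v : V} (huv : G.Adj u v) :
    G.adjMatrix ℝ = (G.deleteEdges {s(u, v)}).adjMatrix ℝ + Cm u v := by
  ext i j
  simp only [Matrix.add_apply, SimpleGraph.adjMatrix_apply, SimpleGraph.deleteEdges_adj,
    Set.mem_singleton_iff, Cm, Matrix.of_apply]
  by_cases hs : s(i, j) = s(u, v)
  · have hadj : G.Adj i j := by
      rcases Sym2.eq_iff.mp hs with ⟨rfl, rfl⟩ | ⟨rfl, rfl⟩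
      · exact huv
      · exact huv.symm
    simp [hs, hadj]
  · by_cases hadj : G.Adj i j <;> simp [hs, hadj]

end SpecCore

end

open SpecCore in
/-- For a connected non-bipartite graph,
`−λ_min(G) < max_{e ∈ E} ρ(G−e)`. -/
theorem neg_lamMin_lt_rhoE
    {V : Type*} [Fintype V] [DecidableEq V] (G : SimpleGraph V)
    (hG : G.Connected) (hnb : ¬ IsBipartite G) :
    -lamMin G < sSup {r : ℝ | ∃ e ∈ G.edgeSet, r = grho (G.deleteEdges {e})} := by
  classical
  have hVne : Nonempty V := hG.nonempty
  letI instA : DecidableRel G.Adj := Classical.decRel G.Adj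
  have hAsymm : (G.adjMatrix ℝ)ᵀ = G.adjMatrix ℝ := SimpleGraph.transpose_adjMatrix G
  obtain ⟨lam, hlameig, hlamray, -⟩ := specRad_facts (G.adjMatrix ℝ) hAsymm
  -- lamMin G = lam
  have hlm : lamMin G = lam := by
    have hlb : ∀ μ ∈ {μ : ℝ | IsEigenval (G.adjMatrix ℝ) μ}, lam ≤ μ := by
      rintro μ ⟨x, hx0, hx⟩
      have hpos := sum_sq_pos x hx0
      have := hlamray x
      rw [qf_of_eigen (G.adjMatrix ℝ) x hx] at this
      exact le_of_mul_le_mul_right this hpos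
    have hmem : lam ∈ {μ : ℝ | IsEigenval (G.adjMatrix ℝ) μ} := hlameig
    show sInf {μ : ℝ | IsEigenval (G.adjMatrix ℝ) μ} = lam
    exact le_antisymm (csInf_le ⟨lam, hlb⟩ hmem) (le_csInf ⟨lam, hmem⟩ hlb)
  obtain ⟨y, hy1, hyeig⟩ := exists_unit_eigen (G.adjMatrix ℝ) hlameig
  have hqAy : qf (G.adjMatrix ℝ) y = lam := by
    rw [qf_of_eigen (G.adjMatrix ℝ) y hyeig, hy1, mul_one]
  rw [hlm]
  by_contra hcon
  push_neg at hcon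
  have hSbdd : BddAbove {r : ℝ | ∃ e ∈ G.edgeSet, r = grho (G.deleteEdges {e})} := by
    have hsub : {r : ℝ | ∃ e ∈ G.edgeSet, r = grho (G.deleteEdges {e})} ⊆
        (fun e => grho (G.deleteEdges {e})) '' G.edgeSet := by
      rintro r ⟨e, he, rfl⟩; exact ⟨e, he, rfl⟩
    exact (((Set.toFinite G.edgeSet).image _).bddAbove).mono hsub
  have hS : ∀ u v : V, G.Adj u v →
      specRad ((G.deleteEdges {s(u, v)}).adjMatrix ℝ) ≤ -lam := by
    intro u v huv
    have hmem : grho (G.deleteEdges {s(u, v)}) ∈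
        {r : ℝ | ∃ e ∈ G.edgeSet, r = grho (G.deleteEdges {e})} :=
      ⟨s(u, v), (SimpleGraph.mem_edgeSet G).mpr huv, rfl⟩
    have h := (le_csSup hSbdd hmem).trans hcon
    unfold grho at h
    exact (le_of_eq (by congr)).trans h
  -- key facts per deleted edge
  have hkey : ∀ u v : V, G.Adj u v →
      (lam - 2 * (y u * y v) ≥ lam) ∧
      (y u * y v = 0 → (G.deleteEdges {s(u, v)}).adjMatrix ℝ *ᵥ y = lam • y) := by
    intro u v huv
    have hBsymm : ((G.deleteEdges {s(u, v)}).adjMatrix ℝ)ᵀ =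
        (G.deleteEdges {s(u, v)}).adjMatrix ℝ := SimpleGraph.transpose_adjMatrix _
    obtain ⟨mB, hBeig, hBray, hBspec⟩ := specRad_facts ((G.deleteEdges {s(u, v)}).adjMatrix ℝ) hBsymm
    have hsplit := adj_split G (u := u) (v := v) huv
    have hqB : qf ((G.deleteEdges {s(u, v)}).adjMatrix ℝ) y = lam - 2 * (y u * y v) := by
      have := qf_add ((G.deleteEdges {s(u, v)}).adjMatrix ℝ) (Cm u v) y
      rw [← hsplit, hqAy, qf_Cm u v huv.ne y] at this
      linarith
    have hmB_le : mB ≤ lam - 2 * (y u * y v) := by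
      have := hBray y
      rw [hy1, mul_one, hqB] at this
      exact this
    have hspec := hS u v huv
    have hge : lam ≤ mB := by linarith
    constructor
    · linarith
    · intro hprod0
      have hqB' : qf ((G.deleteEdges {s(u, v)}).adjMatrix ℝ) y = lam := by
        rw [hqB, hprod0]; ring
      have hmBlam : mB = lam := le_antisymm (by rw [hprod0] at hmB_le; linarith) hge
      have hmin : ∀ x : V → ℝ, qf ((G.deleteEdges {s(u, v)}).adjMatrix ℝ) y * (∑ i, x i * x i)
          ≤ qf ((G.deleteEdges {s(u, v)}).adjMatrix ℝ) x := by
        intro x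
        rw [hqB', ← hmBlam]
        exact hBray x
      have := eigen_of_min _ hBsymm y hy1 hmin
      rw [hqB'] at this
      exact this
  by_cases hposc : ∃ u v : V, G.Adj u v ∧ 0 < y u * y v
  · obtain ⟨u, v, huv, hprod⟩ := hposc
    have := (hkey u v huv).1
    linarith
  · push_neg at hposc
    by_cases hzero : ∃ a : V, y a = 0
    · -- zero propagation
      have claim : ∀ a b : V, G.Adj a b → y a = 0 → y b = 0 := by
        intro a b hab ha0
        have heigB := (hkey a b hab).2 (by rw [ha0]; ring)
        have hsplit := adj_split G (u := a) (v := b) hab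
        have hAy : G.adjMatrix ℝ *ᵥ y = lam • y := hyeig
        have hCy : (Cm a b).mulVec y =
            (G.adjMatrix ℝ *ᵥ y) - ((G.deleteEdges {s(a, b)}).adjMatrix ℝ *ᵥ y) := by
          rw [hsplit, Matrix.add_mulVec]; abel
        have hC0 : (Cm a b).mulVec y = 0 := by
          rw [hCy, hAy, heigB]; abel
        have := congrFun hC0 a
        rw [Cm_mulVec a b hab.ne y a] at this
        simpa [hab.ne] using this
      obtain ⟨a, ha0⟩ := hzero
      have aux : ∀ (s t : V) (w : G.Walk s t), y s = 0 → y t = 0 := by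
        intro s t w
        induction w with
        | nil => exact id
        | cons h p ih => intro hs; exact ih (claim _ _ h hs)
      have hall : ∀ v : V, y v = 0 := fun v =>
        (hG.preconnected a v).elim fun w => aux a v w ha0
      have : (1 : ℝ) = 0 := by rw [← hy1]; simp [hall]
      norm_num at this
    · push_neg at hzero
      exact hnb ⟨fun v => decide (0 < y v), by
        intro i j hij hc
        have h1 : y i * y j ≤ 0 := hposc i j hij
        have h2 : y i * y j ≠ 0 := mul_ne_zero (hzero i) (hzero j)
        have h3 : y i * y j < 0 := lt_of_le_of_ne h1 h2
        rw [decide_eq_decide] at hc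
        rcases mul_neg_iff.mp h3 with ⟨ha, hb⟩ | ⟨ha, hb⟩
        · have := hc.mp ha; linarith
        · have := hc.mpr hb; linarith⟩
end

section
/- Let G be a connected finite simple graph and π a sign function on G such that the signed graph G_π is not balanced. Then there exists a proper spanning subgraph H of G (same vertex set, edge set a proper subset of E) such that λ₁(G_π) < ρ(H), where λ₁(G_π) is the largest eigenvalue of A(G_π) and ρ(H) is the spectral radius of the adjacency matrix of H. -/
open Matrix Finset
open scoped Classical

/-- largest eigenvalue of a real symmetric matrix -/
noncomputable def lambdaOne {n : Type*} [Fintype n] (A : Matrix n n ℝ) : ℝ :=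
  sSup {μ : ℝ | IsEigenval A μ}

set_option linter.unusedSectionVars false

section AuxSpec

variable {n : Type*} [Fintype n] [DecidableEq n]

lemma eig_abs_le (A : Matrix n n ℝ) {μ : ℝ} (h : IsEigenval A μ) :
    |μ| ≤ ∑ i, ∑ j, |A i j| := by
  obtain ⟨x, hx0, hx⟩ := h
  obtain ⟨a, ha⟩ := Function.ne_iff.mp hx0
  have hne : (Finset.univ : Finset n).Nonempty := ⟨a, Finset.mem_univ a⟩
  obtain ⟨i, -, hi⟩ := Finset.exists_max_image Finset.univ (fun k => |x k|) hne
  have hxi : 0 < |x i| :=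
    lt_of_lt_of_le (abs_pos.mpr ha) (hi a (Finset.mem_univ a))
  have hrow : |μ| * |x i| ≤ (∑ j, |A i j|) * |x i| := by
    have h1 : (A.mulVec x) i = μ * x i := by rw [hx]; rfl
    have h2 : |∑ j, A i j * x j| ≤ ∑ j, |A i j| * |x i| := by
      refine le_trans (Finset.abs_sum_le_sum_abs _ _) ?_
      refine Finset.sum_le_sum fun j _ => ?_
      rw [abs_mul]
      exact mul_le_mul_of_nonneg_left (hi j (Finset.mem_univ j)) (abs_nonneg _)
    calc |μ| * |x i| = |μ * x i| := (abs_mul _ _).symm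
      _ = |∑ j, A i j * x j| := by rw [← h1]; rfl
      _ ≤ ∑ j, |A i j| * |x i| := h2
      _ = (∑ j, |A i j|) * |x i| := by rw [Finset.sum_mul]
  have h3 : |μ| ≤ ∑ j, |A i j| := le_of_mul_le_mul_right (by simpa using hrow) hxi
  refine le_trans h3 ?_
  exact Finset.single_le_sum (f := fun i => ∑ j, |A i j|)
    (fun k _ => Finset.sum_nonneg fun j _ => abs_nonneg _) (Finset.mem_univ i)

lemma bddAbove_eigSet (A : Matrix n n ℝ) : BddAbove {μ : ℝ | IsEigenval A μ} :=
  ⟨∑ i, ∑ j, |A i j|, fun μ hμ => le_trans (le_abs_self μ) (eig_abs_le A hμ)⟩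

lemma bddAbove_absSet (A : Matrix n n ℝ) :
    BddAbove {r : ℝ | ∃ μ : ℝ, IsEigenval A μ ∧ r = |μ|} := by
  refine ⟨∑ i, ∑ j, |A i j|, ?_⟩
  rintro r ⟨μ, hμ, rfl⟩
  exact eig_abs_le A hμ

lemma dotProduct_self_pos {x : n → ℝ} (hx : x ≠ 0) : 0 < x ⬝ᵥ x := by
  have h0 : 0 ≤ x ⬝ᵥ x := Finset.sum_nonneg fun i _ => mul_self_nonneg (x i)
  rcases h0.lt_or_eq with h | h
  · exact h
  · exfalso
    apply hx
    funext i
    have := Finset.sum_eq_zero_iff_of_nonneg (fun j (_ : j ∈ Finset.univ) => mul_self_nonneg (x j))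
      |>.mp h.symm i (Finset.mem_univ i)
    show x i = 0
    exact mul_self_eq_zero.mp this

lemma exists_max_eig [Nonempty n] {A : Matrix n n ℝ} (hA : A.IsHermitian) :
    ∃ m : ℝ, IsEigenval A m ∧ lambdaOne A = m ∧ (m • (1 : Matrix n n ℝ) - A).PosSemidef := by
  obtain ⟨i, -, him⟩ := Finset.exists_mem_eq_sup' Finset.univ_nonempty hA.eigenvalues
  set m := Finset.univ.sup' Finset.univ_nonempty hA.eigenvalues with hm
  have heig : IsEigenval A m := by
    refine ⟨⇑(hA.eigenvectorBasis i), ?_, ?_⟩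
    · intro h
      exact hA.eigenvectorBasis.orthonormal.ne_zero i (by ext j; exact congrFun h j)
    · rw [hA.mulVec_eigenvectorBasis, him]
  have hpsd : (m • (1 : Matrix n n ℝ) - A).PosSemidef := by
    have hU := hA.spectral_theorem
    have key : m • (1 : Matrix n n ℝ) - A =
        (hA.eigenvectorUnitary : Matrix n n ℝ) *
          Matrix.diagonal (fun j => m - hA.eigenvalues j) *
          (hA.eigenvectorUnitary : Matrix n n ℝ)ᴴ := by
      have h1 : (m • (1 : Matrix n n ℝ)) =
          (hA.eigenvectorUnitary : Matrix n n ℝ) * (m • (1 : Matrix n n ℝ)) *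
            (star (hA.eigenvectorUnitary : Matrix n n ℝ)) := by
        rw [Matrix.mul_smul, mul_one, Matrix.smul_mul,
          (Matrix.mem_unitaryGroup_iff).mp hA.eigenvectorUnitary.2]
      calc m • (1 : Matrix n n ℝ) - A
          = (hA.eigenvectorUnitary : Matrix n n ℝ) * (m • (1 : Matrix n n ℝ)) *
            (star (hA.eigenvectorUnitary : Matrix n n ℝ)) -
            (hA.eigenvectorUnitary : Matrix n n ℝ) *
            Matrix.diagonal (RCLike.ofReal ∘ hA.eigenvalues) *
            (star (hA.eigenvectorUnitary : Matrix n n ℝ)) := by rw [← h1]; exact congrArg (fun X => m • (1 : Matrix n n ℝ) - X) hU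
        _ = (hA.eigenvectorUnitary : Matrix n n ℝ) *
            (m • (1 : Matrix n n ℝ) - Matrix.diagonal (RCLike.ofReal ∘ hA.eigenvalues)) *
            (star (hA.eigenvectorUnitary : Matrix n n ℝ)) := by
            rw [Matrix.mul_sub, Matrix.sub_mul]
        _ = (hA.eigenvectorUnitary : Matrix n n ℝ) *
            Matrix.diagonal (fun j => m - hA.eigenvalues j) *
            (hA.eigenvectorUnitary : Matrix n n ℝ)ᴴ := by
            congr 1
            congr 1
            ext a b
            by_cases hab : a = b
            · subst hab; simp [Matrix.diagonal]
            · simp [Matrix.diagonal, hab, Matrix.one_apply_ne hab]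
    rw [key]
    refine Matrix.PosSemidef.mul_mul_conjTranspose_same ?_ _
    refine Matrix.posSemidef_diagonal_iff.mpr fun j => ?_
    have := Finset.le_sup' hA.eigenvalues (Finset.mem_univ j)
    rw [← hm] at this
    linarith
  have hub : ∀ μ, IsEigenval A μ → μ ≤ m := by
    rintro μ ⟨x, hx0, hx⟩
    have h0 := hpsd.dotProduct_mulVec_nonneg x
    rw [star_trivial] at h0
    have hcalc : x ⬝ᵥ ((m • (1 : Matrix n n ℝ) - A) *ᵥ x) = (m - μ) * (x ⬝ᵥ x) := by
      rw [Matrix.sub_mulVec, Matrix.smul_mulVec, Matrix.one_mulVec, hx,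
        dotProduct_sub, dotProduct_smul, dotProduct_smul]
      simp [smul_eq_mul]; ring
    rw [hcalc] at h0
    nlinarith [dotProduct_self_pos hx0]
  refine ⟨m, heig, ?_, hpsd⟩
  exact IsGreatest.csSup_eq ⟨heig, hub⟩

lemma rayleigh_le {A : Matrix n n ℝ} {m : ℝ}
    (hpsd : (m • (1 : Matrix n n ℝ) - A).PosSemidef) (y : n → ℝ) :
    y ⬝ᵥ A *ᵥ y ≤ m * (y ⬝ᵥ y) := by
  have h0 := hpsd.dotProduct_mulVec_nonneg y
  rw [star_trivial] at h0
  rw [Matrix.sub_mulVec, Matrix.smul_mulVec, Matrix.one_mulVec,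
    dotProduct_sub, dotProduct_smul] at h0
  simp only [smul_eq_mul] at h0
  linarith

lemma rayleigh_eq {A : Matrix n n ℝ} {m : ℝ}
    (hpsd : (m • (1 : Matrix n n ℝ) - A).PosSemidef) {y : n → ℝ}
    (h : y ⬝ᵥ A *ᵥ y = m * (y ⬝ᵥ y)) : A *ᵥ y = m • y := by
  have h0 : star y ⬝ᵥ ((m • (1 : Matrix n n ℝ) - A) *ᵥ y) = 0 := by
    rw [star_trivial, Matrix.sub_mulVec, Matrix.smul_mulVec, Matrix.one_mulVec,
      dotProduct_sub, dotProduct_smul]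
    simp only [smul_eq_mul]
    linarith
  have := (hpsd.dotProduct_mulVec_zero_iff y).mp h0
  rw [Matrix.sub_mulVec, Matrix.smul_mulVec, Matrix.one_mulVec, sub_eq_zero] at this
  exact this.symm

lemma dot_mulVec_expand (A : Matrix n n ℝ) (y z : n → ℝ) :
    y ⬝ᵥ A *ᵥ z = ∑ i, ∑ j, y i * A i j * z j := by
  simp [dotProduct, Matrix.mulVec, Finset.mul_sum, mul_assoc]

end AuxSpec


set_option maxHeartbeats 1000000 in
/-- If `G_π` is an unbalanced signing of a connected graph `G`, then there is
a proper spanning subgraph `H` of `G` with `λ₁(G_π) < ρ(H)`. -/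
theorem lambdaOne_lt_rho_properSpanningSubgraph
    {V : Type*} [Fintype V] [DecidableEq V] (G : SimpleGraph V)
    (hG : G.Connected) (π : G.edgeSet → ℤˣ) (hπ : ¬ IsBalanced G π) :
    ∃ H : SimpleGraph V, H ≤ G ∧ H ≠ G ∧ lambdaOne (signedAdj G π) < grho H := by
  classical
  haveI hne : Nonempty V := hG.nonempty
  set A := signedAdj G π with hAdef
  have hAval : ∀ i j (h : G.Adj i j),
      A i j = ((π ⟨s(i, j), (G.mem_edgeSet).mpr h⟩ : ℤ) : ℝ) := by
    intro i j h
    simp only [hAdef, signedAdj, Matrix.of_apply]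
    rw [dif_pos h]
  have hA0 : ∀ i j, ¬ G.Adj i j → A i j = 0 := by
    intro i j h
    simp only [hAdef, signedAdj, Matrix.of_apply]
    rw [dif_neg h]
  have hApm : ∀ i j, G.Adj i j → A i j = 1 ∨ A i j = -1 := by
    intro i j h
    rw [hAval i j h]
    rcases Int.units_eq_one_or (π ⟨s(i, j), (G.mem_edgeSet).mpr h⟩) with h1 | h1 <;>
      rw [h1] <;> norm_num
  have hAabs : ∀ i j, G.Adj i j → |A i j| = 1 := by
    intro i j h
    rcases hApm i j h with h1 | h1 <;> rw [h1] <;> norm_num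
  have hAsymm : ∀ i j, A j i = A i j := by
    intro i j
    by_cases h : G.Adj i j
    · rw [hAval j i h.symm, hAval i j h]
      have hpe : (⟨s(j, i), (G.mem_edgeSet).mpr h.symm⟩ : G.edgeSet) =
          ⟨s(i, j), (G.mem_edgeSet).mpr h⟩ := Subtype.ext Sym2.eq_swap
      rw [hpe]
    · rw [hA0 j i (fun hh => h hh.symm), hA0 i j h]
  have hAH : A.IsHermitian := by
    ext i j
    rw [Matrix.conjTranspose_apply, star_trivial]
    exact hAsymm i j
  obtain ⟨lam, ⟨x, hx0, hxe⟩, hlamOne, hpsdA⟩ := exists_max_eig hAH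
  have hxceq : ∀ i, ∑ j, A i j * x j = lam * x i := by
    intro i
    have := congrFun hxe i
    simpa [Matrix.mulVec, dotProduct] using this
  -- find a "bad" edge
  have hbad : ∃ u v, G.Adj u v ∧ A u v * (x u * x v) ≤ 0 := by
    by_contra hpos
    push_neg at hpos
    apply hπ
    by_cases hE : ∃ p : V × V, G.Adj p.1 p.2
    · obtain ⟨⟨u0, v0⟩, huv0⟩ := hE
      have hnbr : ∀ i, ∃ j, G.Adj i j := by
        intro i
        obtain ⟨w⟩ := hG.preconnected i u0
        cases w with
        | nil => exact ⟨v0, huv0⟩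
        | cons h p => exact ⟨_, h⟩
      have hxne : ∀ i, x i ≠ 0 := by
        intro i hzero
        obtain ⟨j, hj⟩ := hnbr i
        have := hpos i j hj
        rw [hzero] at this
        simp at this
      set d : V → ℝ := fun i => if 0 < x i then 1 else -1 with hd
      have hd1 : ∀ i, d i = 1 ∨ d i = -1 := by
        intro i
        by_cases h : 0 < x i <;> simp [hd, h]
      have hdx : ∀ i, 0 < d i * x i := by
        intro i
        by_cases h : 0 < x i
        · simp only [hd, if_pos h]; linarith
        · have hlt : x i < 0 := lt_of_le_of_ne (not_lt.mp h) (hxne i)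
          simp only [hd, if_neg h]; linarith
      refine ⟨d, hd1, ?_⟩
      ext i j
      rw [Matrix.mul_diagonal, Matrix.diagonal_mul, ← hAdef]
      by_cases h : G.Adj i j
      · have hsign := hpos i j h
        have h2 : 0 < (d i * d j) * (x i * x j) := by nlinarith [mul_pos (hdx i) (hdx j)]
        have hLHS : signedAdj G (fun _ => 1) i j = 1 := by
          simp only [signedAdj, Matrix.of_apply]
          rw [dif_pos h]
          norm_num
        rw [hLHS]
        rcases hApm i j h with hA1 | hA1 <;> rcases hd1 i with hdi | hdi <;>
          rcases hd1 j with hdj | hdj <;> rw [hA1, hdi, hdj] <;>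
          rw [hA1] at hsign <;> rw [hdi, hdj] at h2 <;> nlinarith [hsign, h2]
      · have hLHS : signedAdj G (fun _ => 1) i j = 0 := by
          simp only [signedAdj, Matrix.of_apply]
          rw [dif_neg h]
        rw [hLHS, hA0 i j h]
        ring
    · push_neg at hE
      refine ⟨fun _ => 1, fun _ => Or.inl rfl, ?_⟩
      rw [show Matrix.diagonal (fun _ : V => (1 : ℝ)) = 1 from Matrix.diagonal_one,
        one_mul, mul_one]
      ext i j
      have h : ¬ G.Adj i j := hE (i, j)
      rw [← hAdef, hA0 i j h]
      simp only [signedAdj, Matrix.of_apply]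
      rw [dif_neg h]
  obtain ⟨u, v, huv, hsign⟩ := hbad
  set H : SimpleGraph V := G.deleteEdges {s(u, v)} with hHdef
  have hHadj : ∀ i j, H.Adj i j ↔ G.Adj i j ∧ ¬ s(i, j) = s(u, v) := by
    intro i j
    rw [hHdef, SimpleGraph.deleteEdges_adj]
    simp
  have hHle : H ≤ G := SimpleGraph.deleteEdges_le _
  have hHne : H ≠ G := by
    intro h
    have hadj : H.Adj u v := by rw [h]; exact huv
    rw [hHadj] at hadj
    exact hadj.2 rfl
  letI : DecidableRel H.Adj := Classical.decRel H.Adj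
  set B : Matrix V V ℝ := H.adjMatrix ℝ with hBdef
  have hgr : grho H = specRad B := rfl
  have hBval : ∀ i j, B i j = if H.Adj i j then (1 : ℝ) else 0 := by
    intro i j
    rw [hBdef]
    simp [SimpleGraph.adjMatrix]
  have hBH : B.IsHermitian := by
    ext i j
    rw [Matrix.conjTranspose_apply, star_trivial, hBval, hBval]
    by_cases h : H.Adj i j
    · rw [if_pos h, if_pos h.symm]
    · rw [if_neg h, if_neg (fun hh => h hh.symm)]
  obtain ⟨mB, hmBeig, hmBlam, hpsdB⟩ := exists_max_eig hBH
  set y : V → ℝ := fun i => |x i| with hy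
  have hyy : y ⬝ᵥ y = x ⬝ᵥ x := by
    simp [dotProduct, hy, abs_mul_abs_self]
  have hxx : 0 < x ⬝ᵥ x := dotProduct_self_pos hx0
  have hxA : x ⬝ᵥ A *ᵥ x = lam * (x ⬝ᵥ x) := by
    rw [hxe, dotProduct_smul]
    simp [smul_eq_mul]
  set F : V → V → ℝ := fun i j => y i * B i j * y j - x i * A i j * x j with hF
  have hFnn : ∀ i j, 0 ≤ F i j := by
    intro i j
    by_cases h : G.Adj i j
    · by_cases he : s(i, j) = s(u, v)
      · have hB0 : B i j = 0 := by
          rw [hBval, if_neg]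
          rw [hHadj]
          tauto
        have hAx : A i j * (x i * x j) ≤ 0 := by
          rcases Sym2.eq_iff.mp he with ⟨h1, h2⟩ | ⟨h1, h2⟩
          · rw [h1, h2]; exact hsign
          · rw [h1, h2]
            calc A v u * (x v * x u) = A u v * (x u * x v) := by rw [hAsymm u v]; ring
              _ ≤ 0 := hsign
        simp only [hF, hB0]
        nlinarith [hAx]
      · have hB1 : B i j = 1 := by
          rw [hBval, if_pos]
          rw [hHadj]
          exact ⟨h, he⟩
        have hle : x i * A i j * x j ≤ |x i| * |x j| := by
          calc x i * A i j * x j ≤ |x i * A i j * x j| := le_abs_self _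
            _ = |x i| * |A i j| * |x j| := by rw [abs_mul, abs_mul]
            _ = |x i| * |x j| := by rw [hAabs i j h]; ring
        simp only [hF, hB1, hy]
        nlinarith [hle]
    · have hB0 : B i j = 0 := by
        rw [hBval, if_neg]
        rw [hHadj]
        tauto
      simp [hF, hB0, hA0 i j h]
  have hsum : y ⬝ᵥ B *ᵥ y - x ⬝ᵥ A *ᵥ x = ∑ i, ∑ j, F i j := by
    rw [dot_mulVec_expand, dot_mulVec_expand, ← Finset.sum_sub_distrib]
    refine Finset.sum_congr rfl fun i _ => ?_
    rw [← Finset.sum_sub_distrib]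
  have hkey : lam * (y ⬝ᵥ y) ≤ y ⬝ᵥ B *ᵥ y := by
    have h1 : 0 ≤ ∑ i, ∑ j, F i j :=
      Finset.sum_nonneg fun i _ => Finset.sum_nonneg fun j _ => hFnn i j
    rw [← hsum] at h1
    rw [hyy, ← hxA]
    linarith
  have hc : 0 < y ⬝ᵥ y := by rw [hyy]; exact hxx
  have hlelam : lam ≤ mB := by
    have h2 := rayleigh_le hpsdB y
    exact le_of_mul_le_mul_right (hkey.trans h2) hc
  have hstrict : lam < mB := by
    rcases hlelam.lt_or_eq with hlt | heqm
    · exact hlt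
    · exfalso
      have hyB : y ⬝ᵥ B *ᵥ y = mB * (y ⬝ᵥ y) :=
        le_antisymm (rayleigh_le hpsdB y) (by rw [← heqm]; exact hkey)
      have hBy : B *ᵥ y = mB • y := rayleigh_eq hpsdB hyB
      have hFzero : ∀ i j, F i j = 0 := by
        have hz : ∑ i, ∑ j, F i j = 0 := by
          rw [← hsum, hyB, ← heqm, hyy, hxA]
          ring
        intro i j
        have h1 := (Finset.sum_eq_zero_iff_of_nonneg
          (fun i (_ : i ∈ Finset.univ) => Finset.sum_nonneg fun j _ => hFnn i j)).mp hz i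
          (Finset.mem_univ i)
        exact (Finset.sum_eq_zero_iff_of_nonneg
          (fun j (_ : j ∈ Finset.univ) => hFnn i j)).mp h1 j (Finset.mem_univ j)
      have hxuv : x u * x v = 0 := by
        have hB0 : B u v = 0 := by
          rw [hBval, if_neg]
          rw [hHadj]
          tauto
        have h2 : x u * A u v * x v = 0 := by
          have h3 := hFzero u v
          simp only [hF, hB0] at h3
          linarith [h3]
        rcases hApm u v huv with hA1 | hA1 <;> rw [hA1] at h2
        · linear_combination h2
        · linear_combination -h2
      have hHzero : ∀ i, x i = 0 → ∀ j, H.Adj i j → x j = 0 := by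
        intro i hi j hij
        have h1 : (B *ᵥ y) i = 0 := by
          rw [hBy]
          simp [hy, hi]
        have h2 : ∑ k, B i k * y k = 0 := by
          simpa [Matrix.mulVec, dotProduct] using h1
        have h3 : ∀ k, 0 ≤ B i k * y k := by
          intro k
          by_cases hk : H.Adj i k
          · rw [hBval, if_pos hk, one_mul]
            exact abs_nonneg _
          · rw [hBval, if_neg hk, zero_mul]
        have h4 := (Finset.sum_eq_zero_iff_of_nonneg
          (fun k (_ : k ∈ Finset.univ) => h3 k)).mp h2 j (Finset.mem_univ j)
        rw [hBval, if_pos hij, one_mul] at h4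
        exact abs_eq_zero.mp h4
      have hGzero : ∀ i, x i = 0 → ∀ j, G.Adj i j → x j = 0 := by
        intro i hi j hij
        by_cases he : s(i, j) = s(u, v)
        · have hsum0 : ∑ k, A i k * x k = 0 := by rw [hxceq i, hi, mul_zero]
          have hothers : ∀ k ∈ Finset.univ, k ≠ j → A i k * x k = 0 := by
            intro k _ hk
            by_cases hadj : G.Adj i k
            · have hne2 : ¬ s(i, k) = s(u, v) := by
                intro hik
                have heq2 : s(i, j) = s(i, k) := he.trans hik.symm
                rcases Sym2.eq_iff.mp heq2 with ⟨-, hjk⟩ | ⟨h1, -⟩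
                · exact hk hjk.symm
                · rw [← h1] at hadj
                  exact G.irrefl hadj
              have hxk : x k = 0 := hHzero i hi k ((hHadj i k).mpr ⟨hadj, hne2⟩)
              rw [hxk, mul_zero]
            · rw [hA0 i k hadj, zero_mul]
          have h5 : ∑ k, A i k * x k = A i j * x j :=
            Finset.sum_eq_single j hothers (fun hj => absurd (Finset.mem_univ j) hj)
          have hj : A i j * x j = 0 := by rw [← h5]; exact hsum0
          rcases hApm i j hij with hA1 | hA1 <;> rw [hA1] at hj <;> linarith [hj]
        · exact hHzero i hi j ((hHadj i j).mpr ⟨hij, he⟩)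
      obtain ⟨w, hw⟩ : ∃ w, x w = 0 := by
        rcases mul_eq_zero.mp hxuv with h | h
        exacts [⟨u, h⟩, ⟨v, h⟩]
      have hwalk : ∀ (a b : V) (p : G.Walk a b), x a = 0 → x b = 0 := by
        intro a b p
        induction p with
        | nil => exact fun h => h
        | cons h q ih => exact fun ha => ih (hGzero _ ha _ h)
      have hall : ∀ i, x i = 0 := by
        intro i
        obtain ⟨p⟩ := hG.preconnected w i
        exact hwalk w i p hw
      exact hx0 (funext hall)
  refine ⟨H, hHle, hHne, ?_⟩
  rw [hlamOne, hgr]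
  have hmem : |mB| ∈ {r : ℝ | ∃ μ : ℝ, IsEigenval B μ ∧ r = |μ|} := ⟨mB, hmBeig, rfl⟩
  have hfin : mB ≤ specRad B :=
    le_trans (le_abs_self mB) (le_csSup (bddAbove_absSet B) hmem)
  linarith [hstrict, hfin]
end

section
/- Let G be a connected finite simple graph. Then ρ(G_π) = ρ(G) holds for every sign function π on G if and only if G is a tree (connected and acyclic) or G is an odd-unicyclic graph (connected, containing exactly one cycle, and that cycle has odd length; equivalently, connected with as many edges as vertices and non-bipartite). -/
open Matrix Finset
open scoped Classical

set_option linter.unusedSectionVars false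
set_option maxHeartbeats 1600000

noncomputable section

open scoped RealInnerProductSpace

namespace SpecAux


variable {n : Type*} [Fintype n] [DecidableEq n]

section Herm
variable [Nonempty n] {A : Matrix n n ℝ}

/-- eigenvector matrix entries -/
def B (hA : A.IsHermitian) (i j : n) : ℝ := hA.eigenvectorBasis i j

/-- coefficients of x in the eigenbasis -/
def coef (hA : A.IsHermitian) (x : n → ℝ) (i : n) : ℝ := ∑ j, B hA i j * x j

lemma symmA (hA : A.IsHermitian) (j k : n) : A j k = A k j := by
  have := congrFun (congrFun hA k) j
  simpa [Matrix.conjTranspose_apply] using this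

lemma repr_eq (hA : A.IsHermitian) (x : n → ℝ) (j : n) :
    ∑ i, coef hA x i * B hA i j = x j := by
  have h := hA.eigenvectorBasis.sum_repr' (WithLp.toLp 2 x : EuclideanSpace ℝ n)
  have h2 := congrArg (fun v : EuclideanSpace ℝ n => v j) h
  have h3 : (∑ i, ⟪hA.eigenvectorBasis i, (WithLp.toLp 2 x : EuclideanSpace ℝ n)⟫ • hA.eigenvectorBasis i) j
      = ∑ i, ⟪hA.eigenvectorBasis i, (WithLp.toLp 2 x : EuclideanSpace ℝ n)⟫ * (hA.eigenvectorBasis i) j := by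
    simp [WithLp.ofLp_sum]
  simp only [] at h2
  rw [h3] at h2
  rw [← h2]
  refine Finset.sum_congr rfl fun i _ => ?_
  simp [coef, B, PiLp.inner_apply, RCLike.inner_apply, conj_trivial, mul_comm]

lemma mulvecB (hA : A.IsHermitian) (i j : n) :
    (A.mulVec (B hA i)) j = hA.eigenvalues i * B hA i j := by
  have := congrFun (hA.mulVec_eigenvectorBasis i) j
  show (A *ᵥ (hA.eigenvectorBasis i).ofLp) j = hA.eigenvalues i * (hA.eigenvectorBasis i).ofLp j
  simpa using this

lemma orth (hA : A.IsHermitian) (i k : n) :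
    ∑ j, B hA i j * B hA k j = if i = k then 1 else 0 := by
  have := orthonormal_iff_ite.mp hA.eigenvectorBasis.orthonormal i k
  simpa [B, PiLp.inner_apply, RCLike.inner_apply, conj_trivial, mul_comm] using this

lemma coef_mulVec (hA : A.IsHermitian) (x : n → ℝ) (i : n) :
    coef hA (A.mulVec x) i = hA.eigenvalues i * coef hA x i := by
  unfold coef
  calc ∑ j, B hA i j * (A.mulVec x) j
      = ∑ j, ∑ k, B hA i j * (A j k * x k) := by
        refine Finset.sum_congr rfl fun j _ => ?_
        rw [Matrix.mulVec, dotProduct, Finset.mul_sum]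
    _ = ∑ k, (∑ j, A k j * B hA i j) * x k := by
        rw [Finset.sum_comm]
        refine Finset.sum_congr rfl fun k _ => ?_
        rw [Finset.sum_mul]
        refine Finset.sum_congr rfl fun j _ => ?_
        rw [symmA hA j k]; ring
    _ = ∑ k, (hA.eigenvalues i * B hA i k) * x k := by
        refine Finset.sum_congr rfl fun k _ => ?_
        have := mulvecB hA i k
        rw [Matrix.mulVec, dotProduct] at this
        rw [this]
    _ = hA.eigenvalues i * ∑ k, B hA i k * x k := by
        rw [Finset.mul_sum]; exact Finset.sum_congr rfl fun k _ => by ring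

lemma sum_mul_sum_orth (hA : A.IsHermitian) (c d : n → ℝ) :
    ∑ j, (∑ i, c i * B hA i j) * (∑ k, d k * B hA k j) = ∑ i, c i * d i := by
  calc ∑ j, (∑ i, c i * B hA i j) * (∑ k, d k * B hA k j)
      = ∑ j, ∑ i, ∑ k, (c i * d k) * (B hA i j * B hA k j) := by
        refine Finset.sum_congr rfl fun j _ => ?_
        rw [Finset.sum_mul_sum]
        exact Finset.sum_congr rfl fun i _ => Finset.sum_congr rfl fun k _ => by ring
    _ = ∑ i, ∑ k, (c i * d k) * ∑ j, B hA i j * B hA k j := by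
        rw [Finset.sum_comm]
        refine Finset.sum_congr rfl fun i _ => ?_
        rw [Finset.sum_comm]
        exact Finset.sum_congr rfl fun k _ => by rw [Finset.mul_sum]
    _ = ∑ i, c i * d i := by
        refine Finset.sum_congr rfl fun i _ => ?_
        rw [Finset.sum_eq_single i]
        · rw [orth hA i i]; simp
        · intro k _ hk; rw [orth hA i k, if_neg (Ne.symm hk), mul_zero]
        · intro h; exact absurd (Finset.mem_univ i) h

lemma dot_self_eq (hA : A.IsHermitian) (x : n → ℝ) : x ⬝ᵥ x = ∑ i, (coef hA x i) ^ 2 := by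
  have := sum_mul_sum_orth hA (coef hA x) (coef hA x)
  rw [dotProduct]
  simp_rw [repr_eq hA x] at this
  rw [this]
  exact Finset.sum_congr rfl fun i _ => (sq _).symm

lemma dot_mulVec_eq (hA : A.IsHermitian) (x : n → ℝ) :
    x ⬝ᵥ (A.mulVec x) = ∑ i, hA.eigenvalues i * (coef hA x i) ^ 2 := by
  have := sum_mul_sum_orth hA (coef hA x) (fun i => hA.eigenvalues i * coef hA x i)
  have hrw : ∀ j, ∑ k, (fun i => hA.eigenvalues i * coef hA x i) k * B hA k j = (A.mulVec x) j := by
    intro j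
    have h1 := repr_eq hA (A.mulVec x) j
    rw [← h1]
    exact Finset.sum_congr rfl fun k _ => by rw [coef_mulVec hA x k]
  simp_rw [hrw, repr_eq hA x] at this
  rw [dotProduct, this]
  exact Finset.sum_congr rfl fun i _ => by ring

lemma exists_coef_ne_zero (hA : A.IsHermitian) {x : n → ℝ} (hx : x ≠ 0) :
    ∃ i, coef hA x i ≠ 0 := by
  by_contra h
  push_neg at h
  apply hx
  funext j
  have := repr_eq hA x j
  simp only [h, zero_mul, Finset.sum_const_zero] at this
  exact this.symm ▸ rfl

/-- every eigenvalue is one of the `eigenvalues`. -/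
lemma eigenval_mem (hA : A.IsHermitian) {μ : ℝ} (h : IsEigenval A μ) :
    ∃ i, hA.eigenvalues i = μ := by
  obtain ⟨x, hx, hAx⟩ := h
  obtain ⟨i, hi⟩ := exists_coef_ne_zero hA hx
  refine ⟨i, ?_⟩
  have h1 : coef hA (A.mulVec x) i = μ * coef hA x i := by
    rw [hAx]
    unfold coef
    rw [Finset.mul_sum]
    exact Finset.sum_congr rfl fun j _ => by simp [Pi.smul_apply]; ring
  rw [coef_mulVec hA x i] at h1
  exact mul_right_cancel₀ hi h1

lemma isEigenval_eigenvalues (hA : A.IsHermitian) (i : n) :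
    IsEigenval A (hA.eigenvalues i) := by
  refine ⟨B hA i, ?_, ?_⟩
  · intro h0
    have h1 : ∑ j, B hA i j * B hA i j = 0 := by
      simp only [show B hA i = 0 from h0]; simp
    rw [orth hA i i, if_pos rfl] at h1
    norm_num at h1
  · funext j
    rw [mulvecB hA i j]; simp

/-- the largest eigenvalue -/
def lamMax (hA : A.IsHermitian) : ℝ :=
  haveI : Nonempty n := inferInstance
  Finset.univ.sup' Finset.univ_nonempty hA.eigenvalues

lemma specSet_eq (hA : A.IsHermitian) :
    {r : ℝ | ∃ μ, IsEigenval A μ ∧ r = |μ|} = Set.range (fun i => |hA.eigenvalues i|) := by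
  ext r
  constructor
  · rintro ⟨μ, hμ, rfl⟩
    obtain ⟨i, hi⟩ := eigenval_mem hA hμ
    exact ⟨i, by simp only []; rw [hi]⟩
  · rintro ⟨i, rfl⟩
    exact ⟨_, isEigenval_eigenvalues hA i, rfl⟩

lemma specRad_eq_sup' (hA : A.IsHermitian) :
    specRad A = Finset.univ.sup' Finset.univ_nonempty (fun i => |hA.eigenvalues i|) := by
  rw [specRad, specSet_eq hA, Finset.sup'_eq_csSup_image Finset.univ Finset.univ_nonempty (fun i => |hA.eigenvalues i|)]
  rw [← Set.image_univ, ← Finset.coe_univ]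

lemma abs_eigenval_le (hA : A.IsHermitian) {μ : ℝ} (h : IsEigenval A μ) :
    |μ| ≤ specRad A := by
  obtain ⟨i, hi⟩ := eigenval_mem hA h
  rw [specRad_eq_sup' hA, ← hi]
  exact Finset.le_sup' (fun i => |hA.eigenvalues i|) (Finset.mem_univ i)

lemma specRad_attained (hA : A.IsHermitian) :
    ∃ μ, IsEigenval A μ ∧ |μ| = specRad A := by
  obtain ⟨i, _, hi⟩ := Finset.exists_mem_eq_sup' (Finset.univ_nonempty (α := n))
    (fun i => |hA.eigenvalues i|)
  exact ⟨hA.eigenvalues i, isEigenval_eigenvalues hA i, by rw [specRad_eq_sup' hA, hi]⟩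

lemma lamMax_isEigenval (hA : A.IsHermitian) : IsEigenval A (lamMax hA) := by
  obtain ⟨i, _, hi⟩ := Finset.exists_mem_eq_sup' (Finset.univ_nonempty (α := n)) hA.eigenvalues
  rw [lamMax, hi]
  exact isEigenval_eigenvalues hA i

lemma lamMax_le_specRad (hA : A.IsHermitian) : lamMax hA ≤ specRad A :=
  le_trans (le_abs_self _) (abs_eigenval_le hA (lamMax_isEigenval hA))

lemma rayleigh_le (hA : A.IsHermitian) (x : n → ℝ) :
    x ⬝ᵥ (A.mulVec x) ≤ lamMax hA * (x ⬝ᵥ x) := by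
  rw [dot_mulVec_eq hA x, dot_self_eq hA x, Finset.mul_sum]
  refine Finset.sum_le_sum fun i _ => ?_
  have h1 : hA.eigenvalues i ≤ lamMax hA := Finset.le_sup' _ (Finset.mem_univ i)
  exact mul_le_mul_of_nonneg_right h1 (sq_nonneg _)

lemma eigvec_of_rayleigh_eq (hA : A.IsHermitian) (x : n → ℝ)
    (h : x ⬝ᵥ (A.mulVec x) = lamMax hA * (x ⬝ᵥ x)) :
    A.mulVec x = lamMax hA • x := by
  have hz : ∑ i, (lamMax hA - hA.eigenvalues i) * (coef hA x i) ^ 2 = 0 := by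
    have := dot_mulVec_eq hA x
    rw [h, dot_self_eq hA x, Finset.mul_sum] at this
    have h2 : ∑ i, ((lamMax hA) * (coef hA x i) ^ 2 - hA.eigenvalues i * (coef hA x i) ^ 2) = 0 := by
      rw [Finset.sum_sub_distrib, this]; ring
    rw [← h2]
    exact Finset.sum_congr rfl fun i _ => by ring
  have hterm : ∀ i ∈ Finset.univ, (lamMax hA - hA.eigenvalues i) * (coef hA x i) ^ 2 = 0 := by
    rw [← Finset.sum_eq_zero_iff_of_nonneg]
    · exact hz
    · intro i _
      have h1 : hA.eigenvalues i ≤ lamMax hA := Finset.le_sup' _ (Finset.mem_univ i)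
      exact mul_nonneg (by linarith) (sq_nonneg _)
  have hcoef : ∀ i, hA.eigenvalues i * coef hA x i = lamMax hA * coef hA x i := by
    intro i
    rcases eq_or_ne (coef hA x i) 0 with h0 | h0
    · rw [h0, mul_zero, mul_zero]
    · have := hterm i (Finset.mem_univ i)
      have h2 : lamMax hA - hA.eigenvalues i = 0 := by
        rcases mul_eq_zero.mp this with h3 | h3
        · exact h3
        · exact absurd (pow_eq_zero_iff (n := 2) (by norm_num) |>.mp h3) h0
      rw [show hA.eigenvalues i = lamMax hA by linarith]
  funext j
  have h1 : (A.mulVec x) j = ∑ i, hA.eigenvalues i * coef hA x i * B hA i j := by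
    rw [← repr_eq hA (A.mulVec x) j]
    exact Finset.sum_congr rfl fun i _ => by rw [coef_mulVec hA x i]
  rw [h1]
  have h2 : (lamMax hA • x) j = lamMax hA * ∑ i, coef hA x i * B hA i j := by
    rw [repr_eq hA x j]; rfl
  rw [h2, Finset.mul_sum]
  exact Finset.sum_congr rfl fun i _ => by rw [hcoef i]; ring

end Herm

section NoHerm
variable {A : Matrix n n ℝ}

lemma isEigenval_neg_iff (μ : ℝ) : IsEigenval (-A) μ ↔ IsEigenval A (-μ) := by
  constructor <;> rintro ⟨x, hx, hAx⟩ <;> refine ⟨x, hx, ?_⟩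
  · have : A.mulVec x = -((-A).mulVec x) := by rw [← Matrix.neg_mulVec, neg_neg]
    rw [this, hAx, ← neg_smul]
  · have : (-A).mulVec x = -(A.mulVec x) := by rw [Matrix.neg_mulVec]
    rw [this, hAx, ← neg_smul, neg_neg]

lemma specRad_neg : specRad (-A) = specRad A := by
  unfold specRad
  congr 1
  ext r
  constructor
  · rintro ⟨μ, hμ, rfl⟩
    exact ⟨-μ, (isEigenval_neg_iff μ).mp hμ, (abs_neg μ).symm⟩
  · rintro ⟨μ, hμ, rfl⟩
    refine ⟨-μ, ?_, (abs_neg μ).symm⟩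
    rw [isEigenval_neg_iff, neg_neg]
    exact hμ

lemma isEigenval_conj_diag {d : n → ℝ} (hd : ∀ i, d i = 1 ∨ d i = -1) {μ : ℝ}
    (h : IsEigenval A μ) :
    IsEigenval (Matrix.diagonal d * A * Matrix.diagonal d) μ := by
  obtain ⟨x, hx, hAx⟩ := h
  have hdd : ∀ i, d i * d i = 1 := fun i => by rcases hd i with h | h <;> rw [h] <;> norm_num
  refine ⟨fun i => d i * x i, ?_, ?_⟩
  · intro h0
    apply hx
    funext i
    have := congrFun h0 i
    simp only [Pi.zero_apply] at this ⊢
    have h2 := congrArg (fun t => d i * t) this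
    simp only [mul_zero, ← mul_assoc, hdd i, one_mul] at h2
    exact h2
  · funext i
    rw [← Matrix.mulVec_mulVec, ← Matrix.mulVec_mulVec]
    have hdx : (Matrix.diagonal d).mulVec (fun i => d i * x i) = x := by
      funext j
      rw [Matrix.mulVec_diagonal]
      rw [← mul_assoc, hdd j, one_mul]
    rw [hdx]
    rw [Matrix.mulVec_diagonal]
    have := congrFun hAx i
    simp only [Pi.smul_apply, smul_eq_mul] at this ⊢
    rw [this]; ring

lemma specRad_conj_diag {d : n → ℝ} (hd : ∀ i, d i = 1 ∨ d i = -1) :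
    specRad (Matrix.diagonal d * A * Matrix.diagonal d) = specRad A := by
  have hdd : Matrix.diagonal d * Matrix.diagonal d = 1 := by
    rw [Matrix.diagonal_mul_diagonal]
    have : (fun i => d i * d i) = fun _ => (1 : ℝ) := funext fun i => by
      rcases hd i with h | h <;> rw [h] <;> norm_num
    rw [show (Matrix.diagonal fun i => d i * d i) = Matrix.diagonal (fun _ => (1:ℝ)) by rw [this]]
    exact Matrix.diagonal_one
  have hback : Matrix.diagonal d * (Matrix.diagonal d * A * Matrix.diagonal d) *
      Matrix.diagonal d = A := by
    rw [show Matrix.diagonal d * (Matrix.diagonal d * A * Matrix.diagonal d) * Matrix.diagonal d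
      = (Matrix.diagonal d * Matrix.diagonal d) * A * (Matrix.diagonal d * Matrix.diagonal d) by
        noncomm_ring]
    rw [hdd, one_mul, mul_one]
  unfold specRad
  congr 1
  ext r
  constructor
  · rintro ⟨μ, hμ, rfl⟩
    refine ⟨μ, ?_, rfl⟩
    have := isEigenval_conj_diag hd hμ
    rwa [hback] at this
  · rintro ⟨μ, hμ, rfl⟩
    exact ⟨μ, isEigenval_conj_diag hd hμ, rfl⟩

end NoHerm
end SpecAux

namespace GraphAux

open SpecAux SimpleGraph

variable {V : Type*} [Fintype V] [DecidableEq V] {G : SimpleGraph V}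

/-- real value of the sign of an edge -/
def pval (π : G.edgeSet → ℤˣ) {i j : V} (h : G.Adj i j) : ℝ :=
  ((π ⟨s(i, j), (G.mem_edgeSet).mpr h⟩ : ℤ) : ℝ)

lemma pval_one_or_neg_one (π : G.edgeSet → ℤˣ) {i j : V} (h : G.Adj i j) :
    pval π h = 1 ∨ pval π h = -1 := by
  rcases Int.units_eq_one_or (π ⟨s(i, j), (G.mem_edgeSet).mpr h⟩) with h1 | h1 <;>
    [left; right] <;> simp [pval, h1]

lemma pval_symm (π : G.edgeSet → ℤˣ) {i j : V} (h : G.Adj i j) :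
    pval π h.symm = pval π h := by
  unfold pval
  have h2 : (⟨s(j, i), (G.mem_edgeSet).mpr h.symm⟩ : G.edgeSet)
      = ⟨s(i, j), (G.mem_edgeSet).mpr h⟩ := Subtype.ext Sym2.eq_swap
  rw [h2]

lemma signedAdj_apply (π : G.edgeSet → ℤˣ) {i j : V} (h : G.Adj i j) :
    signedAdj G π i j = pval π h := by
  simp [signedAdj, h, pval]

lemma signedAdj_apply_not (π : G.edgeSet → ℤˣ) {i j : V} (h : ¬ G.Adj i j) :
    signedAdj G π i j = 0 := by
  simp [signedAdj, h]

lemma signedAdj_isHermitian (π : G.edgeSet → ℤˣ) : (signedAdj G π).IsHermitian := by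
  show (signedAdj G π)ᴴ = signedAdj G π
  funext i j
  rw [Matrix.conjTranspose_apply]
  by_cases h : G.Adj i j
  · rw [signedAdj_apply π h, signedAdj_apply π h.symm, pval_symm π h]
    simp
  · rw [signedAdj_apply_not π h, signedAdj_apply_not π (fun hj => h hj.symm)]
    simp

lemma signedAdj_abs (π : G.edgeSet → ℤˣ) (i j : V) :
    |signedAdj G π i j| = signedAdj G (fun _ => 1) i j := by
  by_cases h : G.Adj i j
  · rw [signedAdj_apply π h, signedAdj_apply (fun _ => 1) h]
    rcases pval_one_or_neg_one π h with h1 | h1 <;> rw [h1] <;> simp [pval]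
  · rw [signedAdj_apply_not π h, signedAdj_apply_not (fun _ => 1) h]
    simp

lemma A0_nonneg (i j : V) : 0 ≤ signedAdj G (fun _ => (1:ℤˣ)) i j := by
  rw [← signedAdj_abs (fun _ => 1) i j]
  exact abs_nonneg _

lemma A0_one (i j : V) (h : G.Adj i j) : signedAdj G (fun _ => (1:ℤˣ)) i j = 1 := by
  rw [signedAdj_apply (fun _ => 1) h]; simp [pval]

lemma grho_eq_specRad : grho G = specRad (signedAdj G (fun _ => 1)) := by
  unfold grho
  congr 1
  funext i j
  by_cases h : G.Adj i j
  · rw [A0_one i j h]; simp [h]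
  · rw [signedAdj_apply_not (fun _ => 1) h]; simp [h]

section Bound
variable [Nonempty V]

lemma abs_eig_le_lamMax (π : G.edgeSet → ℤˣ) {μ : ℝ}
    (h : IsEigenval (signedAdj G π) μ) :
    |μ| ≤ lamMax (signedAdj_isHermitian (G := G) (fun _ => 1)) := by
  set A0 := signedAdj G (fun _ => (1:ℤˣ)) with hA0def
  set hA0 := signedAdj_isHermitian (G := G) (fun _ => 1) with hA0h
  set lam := lamMax hA0 with hlamdef
  obtain ⟨x, hx, heig⟩ := h
  set y : V → ℝ := fun i => |x i| with hydef
  have hyy : y ⬝ᵥ y = x ⬝ᵥ x :=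
    Finset.sum_congr rfl fun i _ => abs_mul_abs_self (x i)
  have hxxpos : 0 < x ⬝ᵥ x := by
    obtain ⟨i0, hi0⟩ := Function.ne_iff.mp hx
    refine Finset.sum_pos' (fun i _ => mul_self_nonneg (x i)) ⟨i0, Finset.mem_univ i0, ?_⟩
    exact mul_self_pos.mpr hi0
  have pw : ∀ i, |μ| * y i ≤ (A0 *ᵥ y) i := by
    intro i
    have h1 : (signedAdj G π *ᵥ x) i = μ * x i := by rw [heig]; simp
    have h2 : |μ| * y i = |∑ k, signedAdj G π i k * x k| := by
      have : (∑ k, signedAdj G π i k * x k) = μ * x i := h1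
      rw [this, abs_mul]
    rw [h2]
    calc |∑ k, signedAdj G π i k * x k| ≤ ∑ k, |signedAdj G π i k * x k| :=
          Finset.abs_sum_le_sum_abs _ _
      _ = ∑ k, A0 i k * y k := Finset.sum_congr rfl fun k _ => by
          rw [abs_mul, signedAdj_abs]
      _ = (A0 *ᵥ y) i := rfl
  have step1 : |μ| * (y ⬝ᵥ y) ≤ y ⬝ᵥ (A0 *ᵥ y) := by
    have h1 : |μ| * (y ⬝ᵥ y) = ∑ i, y i * (|μ| * y i) := by
      rw [dotProduct, Finset.mul_sum]
      exact Finset.sum_congr rfl fun i _ => by ring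
    rw [h1]
    exact Finset.sum_le_sum fun i _ =>
      mul_le_mul_of_nonneg_left (pw i) (abs_nonneg (x i))
  have step2 := rayleigh_le hA0 y
  have : |μ| * (x ⬝ᵥ x) ≤ lam * (x ⬝ᵥ x) := by
    rw [← hyy]; exact le_trans step1 step2
  have hfin : |μ| * (x ⬝ᵥ x) ≤ lam * (x ⬝ᵥ x) := this
  nlinarith [hfin, hxxpos]

lemma grho_eq_lamMax : grho G = lamMax (signedAdj_isHermitian (G := G) (fun _ => 1)) := by
  rw [grho_eq_specRad]
  refine le_antisymm ?_ (lamMax_le_specRad _)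
  obtain ⟨μ, hμ, habs⟩ := specRad_attained (signedAdj_isHermitian (G := G) (fun _ => 1))
  rw [← habs]
  exact abs_eig_le_lamMax (fun _ => 1) hμ

lemma specRad_signed_le (π : G.edgeSet → ℤˣ) : specRad (signedAdj G π) ≤ grho G := by
  obtain ⟨μ, hμ, habs⟩ := specRad_attained (signedAdj_isHermitian (G := G) π)
  rw [← habs, grho_eq_lamMax]
  exact abs_eig_le_lamMax π hμ

lemma per_term {f : V → ℝ} (h : |∑ j, f j| = ∑ j, |f j|) (k : V) :
    f k * |∑ j, f j| = |f k| * (∑ j, f j) := by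
  rcases le_or_gt 0 (∑ j, f j) with hS | hS
  · have habs : |∑ j, f j| = ∑ j, f j := abs_of_nonneg hS
    have hz : ∀ j ∈ Finset.univ, |f j| - f j = 0 := by
      rw [← Finset.sum_eq_zero_iff_of_nonneg (fun j _ => sub_nonneg.mpr (le_abs_self (f j)))]
      rw [Finset.sum_sub_distrib, ← h, habs, sub_self]
    have hk := hz k (Finset.mem_univ k)
    have hfk : |f k| = f k := by linarith
    rw [habs, hfk]
  · have habs : |∑ j, f j| = -(∑ j, f j) := abs_of_neg hS
    have hz : ∀ j ∈ Finset.univ, |f j| + f j = 0 := by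
      rw [← Finset.sum_eq_zero_iff_of_nonneg (fun j _ => by
        have := neg_abs_le (f j); linarith)]
      rw [Finset.sum_add_distrib, ← h, habs]; ring
    have hk := hz k (Finset.mem_univ k)
    have hfk : |f k| = -f k := by linarith
    rw [habs, hfk]; ring

lemma sign_structure (hG : G.Connected) (π : G.edgeSet → ℤˣ)
    {a b : V} (hab : G.Adj a b)
    (heq : specRad (signedAdj G π) = grho G) :
    ∃ (ε : ℝ) (s : V → ℝ), (ε = 1 ∨ ε = -1) ∧ (∀ i, s i = 1 ∨ s i = -1) ∧
      ∀ ⦃i j⦄ (h : G.Adj i j), pval π h = ε * s i * s j := by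
  classical
  set A0 := signedAdj G (fun _ => (1:ℤˣ)) with hA0def
  set hA0 := signedAdj_isHermitian (G := G) (fun _ => 1) with hA0h
  set lam := lamMax hA0 with hlamdef
  have hAπ := signedAdj_isHermitian π
  -- lam is positive
  have hlampos : 0 < lam := by
    set x : V → ℝ := fun v => if v = a then 1 else if v = b then 1 else 0 with hxdef
    have hxnn : ∀ v, 0 ≤ x v := fun v => by simp only [hxdef]; split_ifs <;> norm_num
    have hxx0 : 0 ≤ x ⬝ᵥ x := Finset.sum_nonneg fun v _ => mul_self_nonneg (x v)
    have hxx : x ⬝ᵥ x ≤ 2 := by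
      have hterm : ∀ v, x v * x v ≤ (if v = a then (1:ℝ) else 0) + (if v = b then 1 else 0) := by
        intro v; simp only [hxdef]; split_ifs <;> norm_num
      calc x ⬝ᵥ x ≤ ∑ v, ((if v = a then (1:ℝ) else 0) + (if v = b then 1 else 0)) :=
            Finset.sum_le_sum fun v _ => hterm v
        _ = 2 := by rw [Finset.sum_add_distrib]; simp; norm_num
    have h1 : (1:ℝ) ≤ x ⬝ᵥ (A0 *ᵥ x) := by
      have hAnn : ∀ v j, 0 ≤ A0 v j * x j := fun v j =>
        mul_nonneg (A0_nonneg v j) (hxnn j)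
      have hA0ax : (1:ℝ) ≤ (A0 *ᵥ x) a := by
        have hone : A0 a b * x b = 1 := by
          rw [hA0def, A0_one a b hab]
          simp [hxdef, hab.ne']
        calc (1:ℝ) = A0 a b * x b := hone.symm
          _ ≤ ∑ j, A0 a j * x j :=
            Finset.single_le_sum (fun j _ => hAnn a j) (Finset.mem_univ b)
          _ = (A0 *ᵥ x) a := rfl
      have hterm : ∀ v, 0 ≤ x v * (A0 *ᵥ x) v := fun v =>
        mul_nonneg (hxnn v) (Finset.sum_nonneg fun j _ => hAnn v j)
      calc (1:ℝ) ≤ (A0 *ᵥ x) a := hA0ax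
        _ = x a * (A0 *ᵥ x) a := by simp [hxdef]
        _ ≤ ∑ v, x v * (A0 *ᵥ x) v :=
            Finset.single_le_sum (fun v _ => hterm v) (Finset.mem_univ a)
        _ = x ⬝ᵥ (A0 *ᵥ x) := rfl
    have h2 := rayleigh_le hA0 x
    nlinarith [h1, h2, hxx, hxx0]
  -- an eigenvalue attaining the spectral radius
  obtain ⟨μ, hμeig, hμabs⟩ := specRad_attained hAπ
  have hμlam : |μ| = lam := by rw [hμabs, heq, grho_eq_lamMax]
  obtain ⟨x, hx, heig⟩ := hμeig
  set y : V → ℝ := fun i => |x i| with hydef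
  have hynn : ∀ i, 0 ≤ y i := fun i => abs_nonneg (x i)
  have hAπx : ∀ i, (∑ k, signedAdj G π i k * x k) = μ * x i := by
    intro i
    have : (signedAdj G π *ᵥ x) i = (μ • x) i := by rw [heig]
    simpa [Matrix.mulVec, dotProduct] using this
  have pw : ∀ i, lam * y i ≤ (A0 *ᵥ y) i := by
    intro i
    have h2 : lam * y i = |∑ k, signedAdj G π i k * x k| := by
      rw [hAπx i, abs_mul, hμlam]
    rw [h2]
    calc |∑ k, signedAdj G π i k * x k| ≤ ∑ k, |signedAdj G π i k * x k| :=
          Finset.abs_sum_le_sum_abs _ _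
      _ = ∑ k, A0 i k * y k := Finset.sum_congr rfl fun k _ => by
          rw [abs_mul, signedAdj_abs]
      _ = (A0 *ᵥ y) i := rfl
  have hray_ge : lam * (y ⬝ᵥ y) ≤ y ⬝ᵥ (A0 *ᵥ y) := by
    have h1 : lam * (y ⬝ᵥ y) = ∑ i, y i * (lam * y i) := by
      rw [dotProduct, Finset.mul_sum]
      exact Finset.sum_congr rfl fun i _ => by ring
    rw [h1]
    exact Finset.sum_le_sum fun i _ => mul_le_mul_of_nonneg_left (pw i) (hynn i)
  have hray_eq : y ⬝ᵥ (A0 *ᵥ y) = lam * (y ⬝ᵥ y) :=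
    le_antisymm (rayleigh_le hA0 y) hray_ge
  have heigy : A0 *ᵥ y = lam • y := eigvec_of_rayleigh_eq hA0 y hray_eq
  -- positivity of y
  have hprop : ∀ i, y i = 0 → ∀ j, G.Adj i j → y j = 0 := by
    intro i hyi j hadj
    have h0 : ∑ k, A0 i k * y k = 0 := by
      have : (A0 *ᵥ y) i = (lam • y) i := by rw [heigy]
      have h1 : (A0 *ᵥ y) i = lam * y i := by simpa using this
      rw [show (∑ k, A0 i k * y k) = (A0 *ᵥ y) i from rfl, h1, hyi, mul_zero]
    have hall := (Finset.sum_eq_zero_iff_of_nonneg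
      (fun k _ => mul_nonneg (A0_nonneg i k) (hynn k))).mp h0
    have hj := hall j (Finset.mem_univ j)
    rwa [A0_one i j hadj, one_mul] at hj
  have hwalk : ∀ (u v : V) (p : G.Walk u v), y u = 0 → y v = 0 := by
    intro u v p
    induction p with
    | nil => exact id
    | cons hadj p ih => intro h0; exact ih (hprop _ h0 _ hadj)
  have hypos : ∀ v, 0 < y v := by
    intro v
    rcases (hynn v).lt_or_eq with h | h
    · exact h
    · exfalso
      obtain ⟨i0, hi0⟩ := Function.ne_iff.mp hx
      have h1 : y i0 = 0 := hwalk v i0 (hG.preconnected v i0).some h.symm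
      exact hi0 (by simpa [hydef] using abs_eq_zero.mp h1)
  -- signs
  set sg : V → ℝ := fun v => if x v < 0 then -1 else 1 with hsgdef
  have hsg : ∀ v, sg v = 1 ∨ sg v = -1 := fun v => by
    simp only [hsgdef]; split_ifs <;> [right; left] <;> rfl
  have hxs : ∀ v, x v = sg v * y v := by
    intro v; simp only [hsgdef, hydef]
    rcases lt_trichotomy (x v) 0 with h | h | h
    · rw [if_pos h, abs_of_neg h]; ring
    · rw [h]; simp
    · rw [if_neg (not_lt.mpr h.le), abs_of_pos h]; ring
  set ε : ℝ := if μ < 0 then -1 else 1 with hεdef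
  have hε : ε = 1 ∨ ε = -1 := by simp only [hεdef]; split_ifs <;> [right; left] <;> rfl
  have hμeq : μ = ε * lam := by
    simp only [hεdef]
    rcases lt_or_ge μ 0 with h | h
    · rw [if_pos h, ← hμlam, abs_of_neg h]; ring
    · rw [if_neg (not_lt.mpr h), ← hμlam, abs_of_nonneg h]; ring
  refine ⟨ε, sg, hε, hsg, ?_⟩
  intro i j hadj
  have htri : |∑ k, signedAdj G π i k * x k| = ∑ k, |signedAdj G π i k * x k| := by
    have hL : |∑ k, signedAdj G π i k * x k| = lam * y i := by
      rw [hAπx i, abs_mul, hμlam]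
    have hR : ∑ k, |signedAdj G π i k * x k| = lam * y i := by
      have h1 : ∑ k, |signedAdj G π i k * x k| = ∑ k, A0 i k * y k :=
        Finset.sum_congr rfl fun k _ => by rw [abs_mul, signedAdj_abs]
      rw [h1, show (∑ k, A0 i k * y k) = (A0 *ᵥ y) i from rfl, heigy]
      simp
    rw [hL, hR]
  have hpt := per_term htri j
  rw [hAπx i, signedAdj_apply π hadj] at hpt
  have habsval : |pval π hadj * x j| = y j := by
    rw [abs_mul]
    rcases pval_one_or_neg_one π hadj with h | h <;> rw [h] <;> simp [hydef]
  have habs2 : |μ * x i| = lam * y i := by rw [abs_mul, hμlam]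
  rw [habsval, habs2, hμeq, hxs i, hxs j] at hpt
  have hyi := hypos i
  have hyj := hypos j
  have hcanc : pval π hadj * sg j = ε * sg i := by
    have hfact : (pval π hadj * sg j) * (y j * (lam * y i))
        = (ε * sg i) * (y j * (lam * y i)) := by linear_combination hpt
    have hposf : (0:ℝ) < y j * (lam * y i) := by positivity
    exact mul_right_cancel₀ (ne_of_gt hposf) hfact
  have hsj : sg j * sg j = 1 := by rcases hsg j with h | h <;> rw [h] <;> norm_num
  calc pval π hadj = pval π hadj * (sg j * sg j) := by rw [hsj, mul_one]
    _ = (pval π hadj * sg j) * sg j := by ring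
    _ = (ε * sg i) * sg j := by rw [hcanc]
    _ = ε * sg i * sg j := by ring

end Bound

section Walks

open SimpleGraph.Walk

/-- product of edge signs along a walk -/
def wsgn (π : G.edgeSet → ℤˣ) : ∀ {u v : V}, G.Walk u v → ℝ
  | _, _, SimpleGraph.Walk.nil => 1
  | _, _, SimpleGraph.Walk.cons h p => pval π h * wsgn π p

@[simp] lemma wsgn_nil (π : G.edgeSet → ℤˣ) {u : V} :
    wsgn π (SimpleGraph.Walk.nil : G.Walk u u) = 1 := rfl

@[simp] lemma wsgn_cons (π : G.edgeSet → ℤˣ) {u v w : V} (h : G.Adj u v) (p : G.Walk v w) :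
    wsgn π (SimpleGraph.Walk.cons h p) = pval π h * wsgn π p := rfl

lemma wsgn_one_or (π : G.edgeSet → ℤˣ) {u v : V} (p : G.Walk u v) :
    wsgn π p = 1 ∨ wsgn π p = -1 := by
  induction p with
  | nil => left; rfl
  | cons h p ih =>
    rw [wsgn_cons]
    rcases pval_one_or_neg_one π h with h1 | h1 <;> rcases ih with h2 | h2 <;>
      rw [h1, h2] <;> norm_num

lemma wsgn_sq (π : G.edgeSet → ℤˣ) {u v : V} (p : G.Walk u v) :
    wsgn π p * wsgn π p = 1 := by
  rcases wsgn_one_or π p with h | h <;> rw [h] <;> norm_num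

lemma wsgn_append (π : G.edgeSet → ℤˣ) {u v w : V} (p : G.Walk u v) (q : G.Walk v w) :
    wsgn π (p.append q) = wsgn π p * wsgn π q := by
  induction p with
  | nil => simp
  | cons h p ih => rw [SimpleGraph.Walk.cons_append, wsgn_cons, wsgn_cons, ih]; ring

lemma wsgn_concat (π : G.edgeSet → ℤˣ) {u v w : V} (p : G.Walk u v) (h : G.Adj v w) :
    wsgn π (p.concat h) = wsgn π p * pval π h := by
  rw [SimpleGraph.Walk.concat_eq_append, wsgn_append, wsgn_cons, wsgn_nil, mul_one]

lemma wsgn_telescope (π : G.edgeSet → ℤˣ) {ε : ℝ} {d : V → ℝ}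
    (hd : ∀ v, d v * d v = 1)
    (hpot : ∀ ⦃i j⦄ (h : G.Adj i j), pval π h = ε * d i * d j)
    {u v : V} (p : G.Walk u v) : wsgn π p = ε ^ p.length * d u * d v := by
  induction p with
  | nil =>
    rw [wsgn_nil, SimpleGraph.Walk.length_nil, pow_zero, one_mul]
    exact (hd _).symm
  | @cons u b w h p ih =>
    rw [wsgn_cons, hpot h, ih, SimpleGraph.Walk.length_cons, pow_succ]
    have hb := hd b
    linear_combination (ε ^ p.length * ε * d u * d w) * hb

lemma isPath_concat {u v w : V} {p : G.Walk u v} (hp : p.IsPath) (h : G.Adj v w)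
    (hw : w ∉ p.support) : (p.concat h).IsPath := by
  have h1 : (p.concat h).reverse.IsPath := by
    rw [SimpleGraph.Walk.reverse_concat]
    exact (SimpleGraph.Walk.cons_isPath_iff _ _).2
      ⟨hp.reverse, by simpa [SimpleGraph.Walk.support_reverse] using hw⟩
  have h2 := h1.reverse
  rwa [SimpleGraph.Walk.reverse_reverse] at h2

lemma tree_potential (hT : G.IsTree) (π : G.edgeSet → ℤˣ) :
    ∃ d : V → ℝ, (∀ v, d v = 1 ∨ d v = -1) ∧
      ∀ ⦃i j⦄ (h : G.Adj i j), pval π h = d i * d j := by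
  have hne : Nonempty V := hT.isConnected.nonempty
  obtain ⟨r⟩ := hne
  choose P hP hPu using hT.existsUnique_path r
  refine ⟨fun v => wsgn π (P v), fun v => wsgn_one_or π (P v), ?_⟩
  intro i j h
  by_cases hj : j ∈ (P i).support
  · have htake : ((P i).takeUntil j hj).IsPath := (hP i).takeUntil hj
    have hdrop : ((P i).dropUntil j hj).IsPath := (hP i).dropUntil hj
    have hq : (P i).takeUntil j hj = P j := hPu j _ htake
    have hdrop_eq : (P i).dropUntil j hj = SimpleGraph.Walk.cons h.symm SimpleGraph.Walk.nil := by
      have h2 := hT.IsAcyclic.path_unique ⟨_, hdrop⟩ (SimpleGraph.Path.singleton h.symm)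
      exact congrArg Subtype.val h2
    have hsp : wsgn π (P i) = wsgn π (P j) * pval π h := by
      conv_lhs => rw [← ((P i).take_spec hj)]
      rw [wsgn_append, hq, hdrop_eq, wsgn_cons, wsgn_nil, pval_symm π h, mul_one]
    show pval π h = wsgn π (P i) * wsgn π (P j)
    rw [hsp]
    have hsq := wsgn_sq π (P j)
    linear_combination (-(pval π h)) * hsq
  · have hconc : ((P i).concat h).IsPath := isPath_concat (hP i) h hj
    have hPj : (P i).concat h = P j := hPu j _ hconc
    have hsp : wsgn π (P j) = wsgn π (P i) * pval π h := by
      rw [← hPj, wsgn_concat]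
    show pval π h = wsgn π (P i) * wsgn π (P j)
    rw [hsp]
    have hsq := wsgn_sq π (P i)
    linear_combination (-(pval π h)) * hsq

/-- the signing flipping a single edge -/
def flip (e0 : Sym2 V) : G.edgeSet → ℤˣ := fun e => if (e : Sym2 V) = e0 then -1 else 1

lemma pval_flip (e0 : Sym2 V) {i j : V} (h : G.Adj i j) :
    pval (G := G) (flip e0) h = if s(i, j) = e0 then -1 else 1 := by
  unfold pval flip
  split_ifs with h1 <;> simp

lemma wsgn_flip_of_not_mem {e0 : Sym2 V} {u v : V} {p : G.Walk u v}
    (he : e0 ∉ p.edges) : wsgn (flip e0) p = 1 := by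
  induction p with
  | nil => rfl
  | @cons u b w h p ih =>
    rw [SimpleGraph.Walk.edges_cons] at he
    simp only [List.mem_cons] at he
    push_neg at he
    rw [wsgn_cons, pval_flip, if_neg (fun hc => he.1 hc.symm), ih he.2, mul_one]

lemma wsgn_flip_of_nodup_mem {e0 : Sym2 V} {u v : V} {p : G.Walk u v}
    (hnd : p.edges.Nodup) (he : e0 ∈ p.edges) : wsgn (flip e0) p = -1 := by
  induction p with
  | nil => simp at he
  | @cons u b w h p ih =>
    rw [SimpleGraph.Walk.edges_cons] at he hnd
    rcases List.nodup_cons.mp hnd with ⟨hnmem, hnd2⟩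
    rw [wsgn_cons]
    rcases List.mem_cons.mp he with h1 | h1
    · rw [pval_flip, if_pos h1.symm, wsgn_flip_of_not_mem (h1 ▸ hnmem), mul_one]
    · have hne : s(u, b) ≠ e0 := fun hc => hnmem (hc ▸ h1)
      rw [pval_flip, if_neg hne, ih hnd2 h1, one_mul]

end Walks

section Surgery

open SimpleGraph

lemma sym2_exists (e : Sym2 V) : ∃ a b : V, e = s(a, b) := by
  induction e using Sym2.ind with
  | _ a b => exact ⟨a, b, rfl⟩

lemma reachable_delete {e0 : Sym2 V} {a b : V}
    (he0 : e0 = s(a, b))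
    (hre : (G.deleteEdges {e0}).Reachable a b) :
    ∀ {u w : V}, G.Walk u w → (G.deleteEdges {e0}).Reachable u w := by
  intro u w p
  induction p with
  | nil => exact Reachable.refl _
  | @cons u c w h q ih =>
    refine Reachable.trans ?_ ih
    by_cases hc : s(u, c) = e0
    · rw [he0, Sym2.eq_iff] at hc
      rcases hc with ⟨h1, h2⟩ | ⟨h1, h2⟩
      · subst h1; subst h2; exact hre
      · subst h1; subst h2; exact hre.symm
    · exact SimpleGraph.Adj.reachable
        (by rw [SimpleGraph.deleteEdges_adj]; exact ⟨h, by simpa using hc⟩)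

lemma conn_delete_cycle_edge (hG : G.Connected) {v : V} {c : G.Walk v v}
    (hc : c.IsCycle) {e0 : Sym2 V} (he : e0 ∈ c.edges) :
    (G.deleteEdges {e0}).Connected := by
  have he0E : e0 ∈ G.edgeSet := c.edges_subset_edgeSet he
  have key : ∀ (a b : V), e0 = s(a, b) → (G.deleteEdges {e0}).Connected := by
    intro a b he0
    subst he0
    have hab : G.Adj a b := (G.mem_edgeSet).mp he0E
    have hnb : ¬ G.IsBridge s(a, b) := by
      rw [SimpleGraph.isBridge_iff_forall_cycle_notMem he0E]
      push_neg
      exact ⟨v, c, hc, he⟩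
    rw [SimpleGraph.isBridge_iff] at hnb
    push_neg at hnb
    have hre : (G.deleteEdges {s(a, b)}).Reachable a b := hnb
    haveI : Nonempty V := hG.nonempty
    exact SimpleGraph.Connected.mk
      (fun u w => reachable_delete rfl hre ((hG.preconnected u w).some))
  obtain ⟨a, b, rfl⟩ := sym2_exists e0
  exact key a b rfl

lemma ncard_delete {e0 : Sym2 V} {H : SimpleGraph V} (he : e0 ∈ H.edgeSet) :
    (H.deleteEdges {e0}).edgeSet.ncard = H.edgeSet.ncard - 1 := by
  rw [SimpleGraph.edgeSet_deleteEdges]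
  exact Set.ncard_diff_singleton_of_mem he

lemma ncard_edge_tree {H : SimpleGraph V} (hH : H.IsTree) :
    H.edgeSet.ncard + 1 = Fintype.card V := by
  classical
  letI : Fintype H.edgeSet := (Set.toFinite H.edgeSet).fintype
  have h1 := hH.card_edgeFinset
  have h2 : H.edgeSet.ncard = H.edgeFinset.card := Set.ncard_eq_toFinset_card' _
  rw [h2]
  exact h1

lemma cycle_edges_ne_nil {H : SimpleGraph V} {v : V} {c : H.Walk v v} (hc : c.IsCycle) :
    c.edges ≠ [] := by
  have h3 := hc.three_le_length
  intro h0
  have := c.length_edges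
  rw [h0] at this
  simp at this
  omega

lemma conn_card_le : ∀ (m : ℕ) (H : SimpleGraph V),
    H.edgeSet.ncard = m → H.Connected → Fintype.card V ≤ m + 1 := by
  intro m
  induction m using Nat.strong_induction_on with
  | _ m ih =>
    intro H hm hconn
    by_cases hac : H.IsAcyclic
    · have := ncard_edge_tree ⟨hconn, hac⟩
      omega
    · unfold SimpleGraph.IsAcyclic at hac
      push_neg at hac
      obtain ⟨v, c, hc⟩ := hac
      have hne := cycle_edges_ne_nil hc
      obtain ⟨e0, he0⟩ : ∃ e, e ∈ c.edges := ⟨c.edges.head hne, List.head_mem hne⟩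
      have he0E : e0 ∈ H.edgeSet := c.edges_subset_edgeSet he0
      have hm1 : 1 ≤ m := by
        have := Set.ncard_pos (Set.toFinite H.edgeSet) |>.mpr ⟨e0, he0E⟩
        omega
      have hconn' := conn_delete_cycle_edge hconn hc he0
      have hcard' := ncard_delete he0E
      rw [hm] at hcard'
      have := ih (m - 1) (by omega) _ hcard' hconn'
      omega

lemma exists_tree_delete (hG : G.Connected)
    (hcard : G.edgeSet.ncard = Fintype.card V) :
    ∃ a b : V, G.Adj a b ∧ (G.deleteEdges {s(a, b)}).IsTree := by
  have hnV : 0 < Fintype.card V := @Fintype.card_pos V _ hG.nonempty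
  have hac : ¬ G.IsAcyclic := by
    intro hac
    have := ncard_edge_tree ⟨hG, hac⟩
    omega
  unfold SimpleGraph.IsAcyclic at hac
  push_neg at hac
  obtain ⟨v, c, hc⟩ := hac
  have hne := cycle_edges_ne_nil hc
  obtain ⟨e0, he0⟩ : ∃ e, e ∈ c.edges := ⟨c.edges.head hne, List.head_mem hne⟩
  have he0E : e0 ∈ G.edgeSet := c.edges_subset_edgeSet he0
  have hconnT := conn_delete_cycle_edge hG hc he0
  have hcardT := ncard_delete he0E
  rw [hcard] at hcardT
  have hacT : (G.deleteEdges {e0}).IsAcyclic := by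
    by_contra hacT
    unfold SimpleGraph.IsAcyclic at hacT
    push_neg at hacT
    obtain ⟨w, c2, hc2⟩ := hacT
    have hne2 := cycle_edges_ne_nil hc2
    obtain ⟨e1, he1⟩ : ∃ e, e ∈ c2.edges := ⟨c2.edges.head hne2, List.head_mem hne2⟩
    have he1E : e1 ∈ (G.deleteEdges {e0}).edgeSet := c2.edges_subset_edgeSet he1
    have hpos : 1 ≤ (G.deleteEdges {e0}).edgeSet.ncard :=
      Set.ncard_pos (Set.toFinite _) |>.mpr ⟨e1, he1E⟩
    have hconn2 := conn_delete_cycle_edge hconnT hc2 he1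
    have hcard2 := ncard_delete he1E
    have := conn_card_le _ _ hcard2 hconn2
    omega
  have key : ∀ (a b : V), e0 = s(a, b) →
      ∃ a b : V, G.Adj a b ∧ (G.deleteEdges {s(a, b)}).IsTree := by
    intro a b hab
    refine ⟨a, b, (G.mem_edgeSet).mp (hab ▸ he0E), ?_⟩
    rw [← hab]
    exact ⟨hconnT, hacT⟩
  obtain ⟨a, b, rfl⟩ := sym2_exists e0
  exact key a b rfl

end Surgery

section Potentials

open SimpleGraph

lemma pval_eq_of_sym2 (π : G.edgeSet → ℤˣ) {i j k l : V} (h : G.Adj i j) (h' : G.Adj k l)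
    (he : s(i, j) = s(k, l)) : pval π h = pval π h' := by
  unfold pval
  have h2 : (⟨s(i, j), (G.mem_edgeSet).mpr h⟩ : G.edgeSet)
      = ⟨s(k, l), (G.mem_edgeSet).mpr h'⟩ := Subtype.ext he
  rw [h2]

lemma pval_neg (σ : G.edgeSet → ℤˣ) {i j : V} (h : G.Adj i j) :
    pval (fun e => -(σ e)) h = -(pval σ h) := by
  unfold pval
  simp

lemma wsgn_neg (σ : G.edgeSet → ℤˣ) {u v : V} (p : G.Walk u v) :
    wsgn (fun e => -(σ e)) p = (-1) ^ p.length * wsgn σ p := by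
  induction p with
  | nil => simp
  | @cons u b w h p ih =>
    rw [wsgn_cons, wsgn_cons, pval_neg, ih, SimpleGraph.Walk.length_cons, pow_succ]
    ring

lemma unicyclic_potential (hG : G.Connected) (hcard : G.edgeSet.ncard = Fintype.card V)
    (hnbip : ¬ _root_.IsBipartite G) (π : G.edgeSet → ℤˣ) :
    ∃ (ε : ℝ) (d : V → ℝ), (ε = 1 ∨ ε = -1) ∧ (∀ v, d v = 1 ∨ d v = -1) ∧
      ∀ ⦃i j⦄ (h : G.Adj i j), pval π h = ε * d i * d j := by
  obtain ⟨a, b, hab, hTtree⟩ := exists_tree_delete hG hcard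
  set T := G.deleteEdges {s(a, b)} with hTdef
  have hsub : T.edgeSet ⊆ G.edgeSet := by
    rw [hTdef, SimpleGraph.edgeSet_deleteEdges]; exact Set.diff_subset
  have hGadj : ∀ ⦃i j⦄, T.Adj i j → G.Adj i j := by
    intro i j h
    rw [hTdef, SimpleGraph.deleteEdges_adj] at h
    exact h.1
  have hTadj : ∀ ⦃i j⦄, G.Adj i j → s(i, j) ≠ s(a, b) → T.Adj i j := by
    intro i j h hne
    rw [hTdef, SimpleGraph.deleteEdges_adj]
    exact ⟨h, by simpa using hne⟩
  set rest : (G.edgeSet → ℤˣ) → (T.edgeSet → ℤˣ) := fun σ e => σ ⟨e.1, hsub e.2⟩ with hrestdef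
  have hpvalrest : ∀ (σ : G.edgeSet → ℤˣ) ⦃i j⦄ (h : T.Adj i j),
      pval (rest σ) h = pval σ (hGadj h) := fun σ i j h => rfl
  obtain ⟨d, hd, hpot⟩ := tree_potential hTtree (rest π)
  have hd2 : ∀ v, d v * d v = 1 := fun v => by rcases hd v with h | h <;> rw [h] <;> norm_num
  have hpotG : ∀ ⦃i j⦄ (h : G.Adj i j), s(i, j) ≠ s(a, b) → pval π h = d i * d j := by
    intro i j h hne
    have h' := hTadj h hne
    have h2 := hpot h'
    rw [hpvalrest π h'] at h2
    rwa [pval_eq_of_sym2 π h (hGadj h') rfl]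
  obtain ⟨pab, hpabP, _⟩ := hTtree.existsUnique_path a b
  have htel : wsgn (rest π) pab = d a * d b := by
    have h1 := wsgn_telescope (rest π) (ε := 1) (d := d) hd2
      (fun i j h => by rw [hpot h]; ring) pab
    simpa using h1
  have hpm : pval π hab = 1 ∨ pval π hab = -1 := pval_one_or_neg_one π hab
  by_cases hsign : pval π hab = d a * d b
  · refine ⟨1, d, Or.inl rfl, hd, ?_⟩
    intro i j h
    by_cases hne : s(i, j) = s(a, b)
    · rw [pval_eq_of_sym2 π h hab hne, hsign]
      rcases Sym2.eq_iff.mp hne with ⟨rfl, rfl⟩ | ⟨rfl, rfl⟩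
      · ring
      · ring
    · rw [hpotG h hne]; ring
  · have hsign' : pval π hab = -(d a * d b) := by
      have hdd : d a * d b = 1 ∨ d a * d b = -1 := by
        rcases hd a with h1 | h1 <;> rcases hd b with h2 | h2 <;> rw [h1, h2] <;> norm_num
      rcases hpm with h1 | h1 <;> rcases hdd with h2 | h2
      · exact absurd (h1.trans h2.symm) hsign
      · rw [h1, h2]; norm_num
      · rw [h1, h2]
      · exact absurd (h1.trans h2.symm) hsign
    obtain ⟨dn, hdn, hpotn⟩ := tree_potential hTtree (fun _ => -1)
    have hpvaln : ∀ ⦃i j⦄ (h : T.Adj i j), pval (fun _ => (-1 : ℤˣ)) h = -1 := by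
      intro i j h; unfold pval; simp
    have hdnedge : ∀ ⦃i j⦄, T.Adj i j → dn i * dn j = -1 := by
      intro i j h
      have h2 := hpotn h
      rw [hpvaln h] at h2
      exact h2.symm
    have hdn2 : ∀ v, dn v * dn v = 1 := fun v => by
      rcases hdn v with h1 | h1 <;> rw [h1] <;> norm_num
    have hdnab : dn a * dn b = 1 := by
      have hcases : dn a * dn b = 1 ∨ dn a * dn b = -1 := by
        rcases hdn a with h1 | h1 <;> rcases hdn b with h2 | h2 <;> rw [h1, h2] <;> norm_num
      rcases hcases with hgood | hbad
      · exact hgood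
      · exfalso
        apply hnbip
        refine ⟨fun v => decide (dn v = 1), ?_⟩
        intro i j hij
        have hij2 : dn i * dn j = -1 := by
          by_cases hne : s(i, j) = s(a, b)
          · rcases Sym2.eq_iff.mp hne with ⟨rfl, rfl⟩ | ⟨rfl, rfl⟩
            · exact hbad
            · rw [mul_comm]; exact hbad
          · exact hdnedge (hTadj hij hne)
        have hdnij : dn i ≠ dn j := by
          intro hsame
          rw [hsame] at hij2
          have := hdn2 j
          linarith
        intro heq
        rw [decide_eq_decide] at heq
        rcases hdn i with h1 | h1 <;> rcases hdn j with h2 | h2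
        · exact hdnij (h1.trans h2.symm)
        · exact absurd (heq.mp h1) (by rw [h2]; norm_num)
        · exact absurd (heq.mpr h2) (by rw [h1]; norm_num)
        · exact hdnij (h1.trans h2.symm)
    have hpar : (-1 : ℝ) ^ pab.length = 1 := by
      have h1 := wsgn_telescope (G := T) (fun _ => -1) (ε := 1) (d := dn) hdn2
        (fun i j h => by rw [hpotn h]; ring) pab
      have h2 := wsgn_telescope (G := T) (fun _ => -1) (ε := -1) (d := fun _ => (1 : ℝ))
        (fun v => by norm_num) (fun i j h => by rw [hpvaln h]; ring) pab
      rw [h2] at h1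
      have h3 : (-1 : ℝ) ^ pab.length = dn a * dn b := by
        have := h1
        simp only [one_pow, one_mul, mul_one] at this
        exact this
      rw [h3, hdnab]
    obtain ⟨d2, hd2v, hpot2⟩ := tree_potential hTtree (fun e => -(rest π e))
    have hd2sq : ∀ v, d2 v * d2 v = 1 := fun v => by
      rcases hd2v v with h1 | h1 <;> rw [h1] <;> norm_num
    have htel2 : d2 a * d2 b = d a * d b := by
      have h1 := wsgn_telescope (G := T) (fun e => -(rest π e)) (ε := 1) (d := d2) hd2sq
        (fun i j h => by rw [hpot2 h]; ring) pab
      have h2 := wsgn_neg (rest π) pab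
      rw [h2, htel, hpar] at h1
      simp only [one_pow, one_mul, mul_one] at h1
      exact h1.symm
    refine ⟨-1, d2, Or.inr rfl, hd2v, ?_⟩
    intro i j h
    by_cases hne : s(i, j) = s(a, b)
    · rw [pval_eq_of_sym2 π h hab hne, hsign']
      rcases Sym2.eq_iff.mp hne with ⟨rfl, rfl⟩ | ⟨rfl, rfl⟩
      · linear_combination htel2
      · linear_combination htel2
    · have h' := hTadj h hne
      have hp2 := hpot2 h'
      have hp3 : pval (fun e => -(rest π e)) h' = -(pval (rest π) h') := pval_neg (rest π) h'
      have hp4 : pval (rest π) h' = pval π h := rfl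
      rw [hp3, hp4] at hp2
      linear_combination -hp2

end Potentials

section FinalLemmas

open SimpleGraph

lemma specRad_of_potential (π : G.edgeSet → ℤˣ) {ε : ℝ} {d : V → ℝ}
    (hε : ε = 1 ∨ ε = -1) (hd : ∀ v, d v = 1 ∨ d v = -1)
    (hpot : ∀ ⦃i j⦄ (h : G.Adj i j), pval π h = ε * d i * d j) :
    specRad (signedAdj G π) = grho G := by
  have hmat : ∀ i j, (Matrix.diagonal d * signedAdj G (fun _ => 1) * Matrix.diagonal d) i j
      = d i * signedAdj G (fun _ => 1) i j * d j := by
    intro i j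
    rw [Matrix.mul_diagonal, Matrix.diagonal_mul]
  rcases hε with hε1 | hε1
  · have heq : signedAdj G π
        = Matrix.diagonal d * signedAdj G (fun _ => 1) * Matrix.diagonal d := by
      ext i j
      rw [hmat i j]
      by_cases h : G.Adj i j
      · rw [signedAdj_apply π h, A0_one i j h, hpot h, hε1]; ring
      · rw [signedAdj_apply_not π h, signedAdj_apply_not _ h]; ring
    rw [heq, SpecAux.specRad_conj_diag hd, ← grho_eq_specRad]
  · have heq : signedAdj G π
        = -(Matrix.diagonal d * signedAdj G (fun _ => 1) * Matrix.diagonal d) := by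
      ext i j
      rw [Matrix.neg_apply, hmat i j]
      by_cases h : G.Adj i j
      · rw [signedAdj_apply π h, A0_one i j h, hpot h, hε1]; ring
      · rw [signedAdj_apply_not π h, signedAdj_apply_not _ h]; ring
    rw [heq, SpecAux.specRad_neg, SpecAux.specRad_conj_diag hd, ← grho_eq_specRad]

lemma bip_even_closed (hbip : _root_.IsBipartite G) {v : V} (c : G.Walk v v) :
    Even c.length := by
  obtain ⟨col, hcol⟩ := hbip
  have key : ∀ {u w : V} (p : G.Walk u w), (col u = col w) ↔ Even p.length := by
    intro u w p
    induction p with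
    | nil => simp
    | @cons u b w h q ih =>
      rw [SimpleGraph.Walk.length_cons, Nat.even_add_one, ← ih]
      have hub := hcol h
      cases hcu : col u <;> cases hcb : col b <;> cases hcw : col w <;> simp_all
  exact (key c).mp rfl

variable [Nonempty V]

lemma eps_pow_cycle (hG : G.Connected)
    (hall : ∀ π : G.edgeSet → ℤˣ, specRad (signedAdj G π) = grho G)
    {a b : V} (hab : G.Adj a b) {v : V} (c : G.Walk v v) :
    ∃ ε : ℝ, (ε = 1 ∨ ε = -1) ∧ wsgn (flip (s(a, b))) c = ε ^ c.length := by
  obtain ⟨ε, s, hε, hs, hpot⟩ := sign_structure hG (flip (s(a, b))) hab (hall _)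
  have hs2 : ∀ x, s x * s x = 1 := fun x => by rcases hs x with h | h <;> rw [h] <;> norm_num
  have htel := wsgn_telescope (flip (s(a, b))) (ε := ε) (d := s) hs2 hpot c
  refine ⟨ε, hε, ?_⟩
  rw [htel, mul_assoc, hs2 v, mul_one]

lemma even_cycle_contradiction (hG : G.Connected)
    (hall : ∀ π : G.edgeSet → ℤˣ, specRad (signedAdj G π) = grho G)
    {v : V} {c : G.Walk v v} (hc : c.IsCycle) (heven : Even c.length) : False := by
  have hne := cycle_edges_ne_nil hc
  obtain ⟨e0, he0⟩ : ∃ e, e ∈ c.edges := ⟨c.edges.head hne, List.head_mem hne⟩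
  have he0E := c.edges_subset_edgeSet he0
  obtain ⟨a, b, rfl⟩ := sym2_exists e0
  have hab : G.Adj a b := (G.mem_edgeSet).mp he0E
  obtain ⟨ε, hε, hεlen⟩ := eps_pow_cycle hG hall hab c
  have hflip : wsgn (flip (s(a, b))) c = -1 :=
    wsgn_flip_of_nodup_mem hc.isCircuit.isTrail.edges_nodup he0
  rw [hflip] at hεlen
  rcases hε with h1 | h1
  · rw [h1, one_pow] at hεlen; norm_num at hεlen
  · rw [h1, heven.neg_one_pow] at hεlen; norm_num at hεlen

lemma two_odd_cycles_contradiction (hG : G.Connected)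
    (hall : ∀ π : G.edgeSet → ℤˣ, specRad (signedAdj G π) = grho G)
    {v w : V} {c1 : G.Walk v v} {c2 : G.Walk w w} (hc1 : c1.IsCycle)
    (hodd1 : Odd c1.length) (hodd2 : Odd c2.length)
    {e0 : Sym2 V} (he1 : e0 ∈ c1.edges) (he2 : e0 ∉ c2.edges) : False := by
  have he0E := c1.edges_subset_edgeSet he1
  obtain ⟨a, b, rfl⟩ := sym2_exists e0
  have hab : G.Adj a b := (G.mem_edgeSet).mp he0E
  obtain ⟨ε1, hε1, hεlen1⟩ := eps_pow_cycle hG hall hab c1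
  obtain ⟨ε2, hε2, hεlen2⟩ := eps_pow_cycle hG hall hab c2
  -- the two epsilons come from the same signing; redo with a single call
  obtain ⟨ε, s, hε, hs, hpot⟩ := sign_structure hG (flip (s(a, b))) hab (hall _)
  have hs2 : ∀ x, s x * s x = 1 := fun x => by rcases hs x with h | h <;> rw [h] <;> norm_num
  have ht1 := wsgn_telescope (flip (s(a, b))) (ε := ε) (d := s) hs2 hpot c1
  have ht2 := wsgn_telescope (flip (s(a, b))) (ε := ε) (d := s) hs2 hpot c2
  rw [mul_assoc, hs2 v, mul_one] at ht1
  rw [mul_assoc, hs2 w, mul_one] at ht2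
  have hflip1 : wsgn (flip (s(a, b))) c1 = -1 :=
    wsgn_flip_of_nodup_mem hc1.isCircuit.isTrail.edges_nodup he1
  have hflip2 : wsgn (flip (s(a, b))) c2 = 1 := wsgn_flip_of_not_mem he2
  rw [hflip1] at ht1
  rw [hflip2] at ht2
  rcases hε with h1 | h1
  · rw [h1, one_pow] at ht1; norm_num at ht1
  · rw [h1, hodd2.neg_one_pow] at ht2; norm_num at ht2

end FinalLemmas

end GraphAux

end

/-- For a connected graph `G`, every signing `G_π` has `ρ(G_π) = ρ(G)` iff
`G` is a tree or an odd-unicyclic graph (as many edges as vertices and non-bipartite). -/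
theorem all_signings_same_specRad_iff
    {V : Type*} [Fintype V] [DecidableEq V] (G : SimpleGraph V)
    (hG : G.Connected) :
    (∀ π : G.edgeSet → ℤˣ, specRad (signedAdj G π) = grho G) ↔
      (G.IsTree ∨ (G.edgeSet.ncard = Fintype.card V ∧ ¬ IsBipartite G)) := by
  haveI : Nonempty V := hG.nonempty
  constructor
  · intro hall
    by_contra hcon
    push_neg at hcon
    obtain ⟨hnt, himp⟩ := hcon
    have hac : ¬ G.IsAcyclic := fun h => hnt ⟨hG, h⟩
    unfold SimpleGraph.IsAcyclic at hac
    push_neg at hac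
    obtain ⟨v, c, hc⟩ := hac
    rcases Nat.even_or_odd c.length with he | ho
    · exact GraphAux.even_cycle_contradiction hG hall hc he
    · have hnbip : ¬ IsBipartite G := fun hbip =>
        (Nat.not_odd_iff_even.mpr (GraphAux.bip_even_closed hbip c)) ho
      have hncard : G.edgeSet.ncard ≠ Fintype.card V := fun h => hnbip (himp h)
      have hne := GraphAux.cycle_edges_ne_nil hc
      obtain ⟨e0, he0⟩ : ∃ e, e ∈ c.edges := ⟨c.edges.head hne, List.head_mem hne⟩
      have he0E := c.edges_subset_edgeSet he0
      have hconnT := GraphAux.conn_delete_cycle_edge hG hc he0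
      have hTnacyc : ¬ (G.deleteEdges {e0}).IsAcyclic := by
        intro hacT
        have htree := GraphAux.ncard_edge_tree ⟨hconnT, hacT⟩
        have hdel := GraphAux.ncard_delete he0E
        have hpos : 1 ≤ G.edgeSet.ncard :=
          Set.ncard_pos (Set.toFinite _) |>.mpr ⟨e0, he0E⟩
        omega
      unfold SimpleGraph.IsAcyclic at hTnacyc
      push_neg at hTnacyc
      obtain ⟨w, c2', hc2'⟩ := hTnacyc
      have hsubE : ∀ e ∈ c2'.edges, e ∈ G.edgeSet := fun e hmem => by
        have h3 := c2'.edges_subset_edgeSet hmem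
        rw [SimpleGraph.edgeSet_deleteEdges] at h3
        exact h3.1
      have hc2 : (c2'.transfer G hsubE).IsCycle := hc2'.transfer hsubE
      have hc2edges : (c2'.transfer G hsubE).edges = c2'.edges := c2'.edges_transfer hsubE
      have he0not : e0 ∉ (c2'.transfer G hsubE).edges := by
        rw [hc2edges]
        intro hmem
        have h3 := c2'.edges_subset_edgeSet hmem
        rw [SimpleGraph.edgeSet_deleteEdges] at h3
        simp at h3
      have hlen2 : (c2'.transfer G hsubE).length = c2'.length := by
        simp [SimpleGraph.Walk.length_transfer]
      rcases Nat.even_or_odd (c2'.transfer G hsubE).length with he2 | ho2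
      · exact GraphAux.even_cycle_contradiction hG hall hc2 he2
      · exact GraphAux.two_odd_cycles_contradiction hG hall hc ho ho2 he0 he0not
  · intro hstruct π
    rcases hstruct with htree | ⟨hcard, hnbip⟩
    · obtain ⟨d, hd, hpot⟩ := GraphAux.tree_potential htree π
      exact GraphAux.specRad_of_potential π (Or.inl rfl) hd
        (fun i j h => by rw [hpot h]; ring)
    · obtain ⟨ε, d, hε, hd, hpot⟩ := GraphAux.unicyclic_potential hG hcard hnbip π
      exact GraphAux.specRad_of_potential π hε hd hpot
end
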